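/- arXiv:0908.1251 — 6 statements merged into one kernel-verified Lean document; each statement's English description precedes it below -/
import Mathlib

section
/- Let c > 1, M > 0, and define r : ℝ² → (0,∞) by r(x) := max{c|x|, M}. Then there exists α₀ > 0 such that for every α ∈ (0, α₀], the function x ↦ r(x)^{−α} is (σ,r)-supermedian on ℝ², i.e. (1/2π)∫₀^{2π} r(x + r(x)e^{it})^{−α} dt ≤ r(x)^{−α} for every x ∈ ℝ². -/
open Filter MeasureTheory Finset

lemma prodKey (m : ℕ) (a b : ℂ) (t : ℝ) :
    ‖b‖ ^ (2^m) - ‖a‖ ^ (2^m) ≤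
      ‖∏ k ∈ Finset.range (2^m),
        (a + b * Complex.exp ((↑(t + 2*Real.pi*k/2^m)) * Complex.I))‖ := by
  induction m generalizing a b t with
  | zero =>
    simp only [pow_zero, pow_one, Finset.prod_range_one, Nat.cast_zero]
    have h1 : (t + 2*Real.pi*0/1) = t := by ring
    rw [h1]
    have h2 : ‖b * Complex.exp (↑t * Complex.I)‖ = ‖b‖ := by
      rw [norm_mul, Complex.norm_exp_ofReal_mul_I, mul_one]
    calc ‖b‖ - ‖a‖
        = ‖b * Complex.exp (↑t * Complex.I)‖ - ‖-a‖ := by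
          rw [h2, norm_neg]
      _ ≤ ‖b * Complex.exp (↑t * Complex.I) - -a‖ := norm_sub_norm_le _ _
      _ = ‖a + b * Complex.exp (↑t * Complex.I)‖ := by
          rw [sub_neg_eq_add, add_comm]
  | succ m ih =>
    set N := 2^m with hN
    have h2N : (2:ℕ)^(m+1) = N + N := by rw [pow_succ]; ring
    rw [h2N, Finset.prod_range_add, ← Finset.prod_mul_distrib]
    have key : ∀ k ∈ Finset.range N,
        (a + b * Complex.exp ((↑(t + 2*Real.pi*k/2^(m+1))) * Complex.I)) *
        (a + b * Complex.exp ((↑(t + 2*Real.pi*((N + k : ℕ) : ℝ)/2^(m+1))) * Complex.I))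
        = a^2 + (-(b^2)) * Complex.exp ((↑(2*t + 2*Real.pi*k/2^m)) * Complex.I) := by
      intro k hk
      have hsplit : (t + 2*Real.pi*((N + k : ℕ) : ℝ)/2^(m+1) : ℝ)
          = (t + 2*Real.pi*k/2^(m+1)) + Real.pi := by
        have hNpos : (0:ℝ) < (N:ℝ) := by positivity
        push_cast
        field_simp
        push_cast [hN]
        ring
      have hexp : Complex.exp ((↑(t + 2*Real.pi*((N + k : ℕ) : ℝ)/2^(m+1))) * Complex.I)
          = - Complex.exp ((↑(t + 2*Real.pi*k/2^(m+1))) * Complex.I) := by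
        rw [hsplit]
        push_cast
        rw [add_mul, Complex.exp_add, Complex.exp_pi_mul_I]
        ring
      rw [hexp]
      have hsq : Complex.exp ((↑(t + 2*Real.pi*k/2^(m+1))) * Complex.I) ^ 2
          = Complex.exp ((↑(2*t + 2*Real.pi*k/2^m)) * Complex.I) := by
        rw [← Complex.exp_nat_mul]
        congr 1
        push_cast
        have : (2:ℂ)^(m+1) = 2 * 2^m := by ring
        rw [this]
        have h2m : ((2:ℂ)^m) ≠ 0 := pow_ne_zero _ two_ne_zero
        field_simp
      rw [← hsq]
      ring
    rw [Finset.prod_congr rfl key]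
    have := ih (a^2) (-(b^2)) (2*t)
    calc ‖b‖ ^ (N + N) - ‖a‖ ^ (N + N)
        = ‖-(b^2)‖ ^ 2^m - ‖a^2‖ ^ 2^m := by
          rw [norm_neg, norm_pow, norm_pow, ← pow_mul, ← pow_mul]
          congr 1 <;> congr 1 <;> omega
      _ ≤ _ := this

lemma arith1 {P C A : ℝ} (hP : 0 < P) (hC : 2 < C) (hA : 0 ≤ A) (hAle : A ≤ P / C) :
    P * (C/2) ≤ C * (P - A) := by
  have h1 : C * A ≤ C * (P / C) := mul_le_mul_of_nonneg_left hAle (by linarith)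
  have h2 : C * (P / C) = P := by field_simp
  nlinarith

lemma expQuad {w B : ℝ} (habs1 : |w| ≤ 1) (habs : |w| ≤ B) :
    Real.exp w ≤ (1 + (3/4)*B^2) + w := by
  have hb := Real.exp_bound habs1 (n := 2) (by norm_num)
  have hsum : ∑ m ∈ Finset.range 2, w ^ m / m.factorial = 1 + w := by
    simp [Finset.sum_range_succ]
  rw [hsum] at hb
  norm_num [Nat.factorial] at hb
  have h7 : |w| ^ 2 ≤ B^2 := pow_le_pow_left₀ (abs_nonneg _) habs 2
  rw [sq_abs] at h7
  have h8 := (abs_le.1 hb).2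
  linarith

lemma arith2 {Nr K δ α : ℝ} (hα : 0 ≤ α) (hNr : 0 < Nr) (hK : 0 < K)
    (h8 : α * (3*Nr*K^2) ≤ 4*δ) : Nr * ((3/4)*(α*K)^2) ≤ α * δ := by nlinarith

lemma arith3 {Nr A P q : ℝ} (h1 : Nr * A ≤ q) (h2 : q ≤ P) : Nr * (1 + A) + -P ≤ Nr := by
  nlinarith

/-- Proposition 1.3 (circle-mean part): for `c > 1`, `M > 0` and
`r(x) := max{c|x|, M}`, the function `r^{-α}` is `(σ,r)`-supermedian on `ℝ² = ℂ`
provided `α > 0` is sufficiently small. -/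
theorem stmt1 (c M : ℝ) (hc : 1 < c) (hM : 0 < M) :
    ∃ α₀ > (0:ℝ), ∀ α : ℝ, 0 < α → α ≤ α₀ → ∀ x : ℂ,
      (1 / (2 * Real.pi)) * (∫ t in (0:ℝ)..(2 * Real.pi),
        (max (c * ‖x + (max (c * ‖x‖) M : ℝ) *
            Complex.exp (t * Complex.I)‖) M) ^ (-α))
      ≤ (max (c * ‖x‖) M) ^ (-α) := by
  obtain ⟨n, hn⟩ : ∃ n : ℕ, (2:ℝ) < c ^ n := pow_unbounded_of_one_lt 2 hc
  set N : ℕ := 2 ^ n with hNdef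
  have hNcast : ((N:ℕ):ℝ) = (2:ℝ)^n := by rw [hNdef]; push_cast; ring
  have hNR : (0:ℝ) < (N:ℝ) := by rw [hNcast]; positivity
  have hcN : (2:ℝ) < c ^ N :=
    lt_of_lt_of_le hn (pow_le_pow_right₀ hc.le (Nat.le_of_lt (Nat.lt_two_pow_self)))
  clear_value N
  have hc0 : (0:ℝ) < c := by linarith
  set K : ℝ := max |Real.log (c-1)| (Real.log (c+1)) with hKdef
  have hK : 0 < K := lt_of_lt_of_le (Real.log_pos (by linarith)) (le_max_right _ _)
  set δ : ℝ := Real.log (c^N/2) with hδdef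
  have hδ : 0 < δ := Real.log_pos (by rw [lt_div_iff₀ (by norm_num : (0:ℝ) < 2)]; linarith)
  have hKub : |Real.log (c-1)| ≤ K := le_max_left _ _
  have hKub2 : Real.log (c+1) ≤ K := le_max_right _ _
  clear_value K δ
  refine ⟨min (1/K) (4*δ/(3*(N:ℝ)*K^2)), lt_min (by positivity)
    (div_pos (by linarith) (by positivity)), ?_⟩
  intro α hα hαle x
  have hα1 : α * K ≤ 1 := by
    have h := le_trans hαle (min_le_left _ _)
    calc α * K ≤ (1/K) * K := mul_le_mul_of_nonneg_right h hK.le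
    _ = 1 := by field_simp
  have hα2 : α ≤ 4*δ/(3*(N:ℝ)*K^2) := le_trans hαle (min_le_right _ _)
  set ρ : ℝ := max (c * ‖x‖) M with hρdef
  have hρM : M ≤ ρ := le_max_right _ _
  have hρ : 0 < ρ := lt_of_lt_of_le hM hρM
  have hxρ : c * ‖x‖ ≤ ρ := le_max_left _ _
  set g : ℝ → ℝ := fun t => max (c * ‖x + (ρ:ℂ) * Complex.exp ((t:ℂ) * Complex.I)‖) M
    with hgdef
  have habsexp : ∀ t : ℝ, ‖(ρ:ℂ) * Complex.exp ((t:ℂ) * Complex.I)‖ = ρ := by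
    intro t
    rw [norm_mul, Complex.norm_exp_ofReal_mul_I, mul_one, Complex.norm_of_nonneg hρ.le]
  have hylb : ∀ t : ℝ, ρ - ‖x‖ ≤ ‖x + (ρ:ℂ) * Complex.exp ((t:ℂ) * Complex.I)‖ := by
    intro t
    calc ρ - ‖x‖
        = ‖(ρ:ℂ) * Complex.exp ((t:ℂ) * Complex.I)‖ - ‖-x‖ := by
          rw [habsexp, norm_neg]
      _ ≤ ‖(ρ:ℂ) * Complex.exp ((t:ℂ) * Complex.I) - -x‖ := norm_sub_norm_le _ _
      _ = ‖x + (ρ:ℂ) * Complex.exp ((t:ℂ) * Complex.I)‖ := by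
          rw [sub_neg_eq_add, add_comm]
  have hyub : ∀ t : ℝ, ‖x + (ρ:ℂ) * Complex.exp ((t:ℂ) * Complex.I)‖ ≤ ‖x‖ + ρ := by
    intro t
    calc ‖x + (ρ:ℂ) * Complex.exp ((t:ℂ) * Complex.I)‖
        ≤ ‖x‖ + ‖(ρ:ℂ) * Complex.exp ((t:ℂ) * Complex.I)‖ :=
          norm_add_le _ _
      _ = ‖x‖ + ρ := by rw [habsexp]
  have hxle : ‖x‖ ≤ ρ / c := by rw [le_div_iff₀ hc0]; linarith [hxρ]
  have glb : ∀ t : ℝ, (c-1)*ρ ≤ g t := by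
    intro t
    refine le_trans ?_ (le_max_left _ _)
    have h2 : c * (ρ - ‖x‖) ≤ c * ‖x + (ρ:ℂ) * Complex.exp ((t:ℂ) * Complex.I)‖ :=
      mul_le_mul_of_nonneg_left (hylb t) hc0.le
    nlinarith [hxρ]
  have gub : ∀ t : ℝ, g t ≤ (c+1)*ρ := by
    intro t
    refine max_le ?_ (by nlinarith)
    have h2 : c * ‖x + (ρ:ℂ) * Complex.exp ((t:ℂ) * Complex.I)‖ ≤ c * (‖x‖ + ρ) :=
      mul_le_mul_of_nonneg_left (hyub t) hc0.le
    nlinarith [hxρ]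
  have gpos : ∀ t : ℝ, 0 < g t := fun t => lt_of_lt_of_le hM (le_max_right _ _)
  have hgle : ∀ t : ℝ, c * ‖x + (ρ:ℂ) * Complex.exp ((t:ℂ) * Complex.I)‖ ≤ g t :=
    fun t => le_max_left _ _
  have contg : Continuous g := by
    apply Continuous.max _ continuous_const
    exact continuous_const.mul (continuous_norm.comp (continuous_const.add
      (continuous_const.mul (Complex.continuous_exp.comp
        (Complex.continuous_ofReal.mul continuous_const)))))
  have hper : Function.Periodic (fun t : ℝ => (g t) ^ (-α)) (2*Real.pi) := by
    intro t
    have hexp : ((t + 2*Real.pi : ℝ) : ℂ) * Complex.I = (t:ℂ) * Complex.I + 2*Real.pi*Complex.I := by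
      push_cast; ring
    simp only [hgdef]
    rw [hexp, Complex.exp_add, Complex.exp_two_pi_mul_I, mul_one]
  show 1 / (2*Real.pi) * (∫ t in (0:ℝ)..(2*Real.pi), (g t) ^ (-α)) ≤ ρ ^ (-α)
  clear_value ρ g
  -- product lower bound
  have prodlb : ∀ t : ℝ, ρ^N * (c^N/2) ≤ ∏ k ∈ Finset.range N, g (t + 2*Real.pi*k/2^n) := by
    intro t
    have h1 : ∀ k ∈ Finset.range N,
        c * ‖x + (ρ:ℂ) * Complex.exp ((↑(t + 2*Real.pi*k/2^n) : ℂ) * Complex.I)‖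
          ≤ g (t + 2*Real.pi*k/2^n) := fun k _ => hgle _
    have h0 : ∀ k ∈ Finset.range N,
        0 ≤ c * ‖x + (ρ:ℂ) * Complex.exp ((↑(t + 2*Real.pi*k/2^n) : ℂ) * Complex.I)‖ :=
      fun k _ => by positivity
    refine le_trans ?_ (Finset.prod_le_prod h0 h1)
    rw [Finset.prod_mul_distrib, Finset.prod_const, Finset.card_range, ← norm_prod]
    have h4 := prodKey n x (ρ:ℂ) t
    rw [← hNdef, Complex.norm_of_nonneg hρ.le] at h4
    have h6 : ρ^N * (c^N/2) ≤ c^N * (ρ^N - ‖x‖ ^ N) := by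
      have hxn : ‖x‖ ^ N ≤ ρ^N / c^N := by
        rw [← div_pow]
        exact pow_le_pow_left₀ (norm_nonneg x) hxle N
      exact arith1 (by positivity) hcN (by positivity) hxn
    calc ρ^N * (c^N/2) ≤ c^N * (ρ^N - ‖x‖ ^ N) := h6
      _ ≤ c^N * ‖∏ k ∈ Finset.range N, (x + (ρ:ℂ) * Complex.exp ((↑(t + 2*Real.pi*k/2^n) : ℂ) * Complex.I))‖ :=
          mul_le_mul_of_nonneg_left h4 (by positivity)
      _ = _ := by rw [mul_comm]
  -- pointwise sum estimate
  have pointwise : ∀ t : ℝ,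
      ∑ k ∈ Finset.range N, (g (t + 2*Real.pi*k/2^n)) ^ (-α) ≤ (N:ℝ) * ρ ^ (-α) := by
    intro t
    set u : ℕ → ℝ := fun k => Real.log (g (t + 2*Real.pi*k/2^n) / ρ) with hu
    have hgρpos : ∀ k : ℕ, 0 < g (t + 2*Real.pi*k/2^n) / ρ := fun k => div_pos (gpos _) hρ
    have huub : ∀ k : ℕ, u k ≤ K := by
      intro k
      have h1 : g (t + 2*Real.pi*k/2^n) / ρ ≤ c + 1 := by
        rw [div_le_iff₀ hρ]; linarith [gub (t + 2*Real.pi*k/2^n)]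
      exact le_trans (Real.log_le_log (hgρpos k) h1) hKub2
    have hulb : ∀ k : ℕ, -K ≤ u k := by
      intro k
      have h1 : c - 1 ≤ g (t + 2*Real.pi*k/2^n) / ρ := by
        rw [le_div_iff₀ hρ]; linarith [glb (t + 2*Real.pi*k/2^n)]
      have h2 : Real.log (c-1) ≤ u k := Real.log_le_log (by linarith) h1
      have h3 : -K ≤ Real.log (c-1) := by
        have := neg_abs_le (Real.log (c-1))
        linarith [hKub]
      linarith
    have huabs : ∀ k : ℕ, |u k| ≤ K := fun k => abs_le.2 ⟨hulb k, huub k⟩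
    have hrw : ∀ k : ℕ, (g (t + 2*Real.pi*k/2^n)) ^ (-α) = ρ ^ (-α) * Real.exp (-α * u k) := by
      intro k
      have h1 : g (t + 2*Real.pi*k/2^n) = ρ * (g (t + 2*Real.pi*k/2^n) / ρ) := by
        field_simp
      rw [h1, Real.mul_rpow hρ.le (hgρpos k).le,
        Real.rpow_def_of_pos (hgρpos k), mul_comm (Real.log _)]
    have hexp_le : ∀ k : ℕ, Real.exp (-α * u k) ≤ (1 + (3/4)*(α*K)^2) + (-α * u k) := by
      intro k
      have habs : |(-α) * u k| ≤ α * K := by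
        rw [abs_mul, abs_neg, abs_of_pos hα]
        exact mul_le_mul_of_nonneg_left (huabs k) hα.le
      exact expQuad (le_trans habs hα1) habs
    have hsumu : δ ≤ ∑ k ∈ Finset.range N, u k := by
      have h1 : ∑ k ∈ Finset.range N, u k
          = Real.log (∏ k ∈ Finset.range N, (g (t + 2*Real.pi*k/2^n) / ρ)) := by
        rw [Real.log_prod (fun k _ => (hgρpos k).ne')]
      rw [h1, hδdef]
      apply Real.log_le_log (by rw [lt_div_iff₀ (by norm_num : (0:ℝ) < 2)]; linarith)
      rw [Finset.prod_div_distrib, Finset.prod_const, Finset.card_range,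
        le_div_iff₀ (by positivity)]
      calc c^N/2 * ρ^N = ρ^N * (c^N/2) := by ring
        _ ≤ _ := prodlb t
    have hsum_exp : ∑ k ∈ Finset.range N, Real.exp (-α * u k) ≤ (N:ℝ) := by
      have hNK : 0 < 3*(N:ℝ)*K^2 := mul_pos (mul_pos (by norm_num) hNR) (pow_pos hK 2)
      have h8 : α * (3*(N:ℝ)*K^2) ≤ 4*δ := by
        have := (le_div_iff₀ hNK).1 hα2
        linarith
      have key : (N:ℝ) * ((3/4)*(α*K)^2) ≤ α * δ := arith2 hα.le hNR hK h8
      have hmono : α * δ ≤ α * ∑ k ∈ Finset.range N, u k :=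
        mul_le_mul_of_nonneg_left hsumu hα.le
      have hfin := arith3 key hmono
      calc ∑ k ∈ Finset.range N, Real.exp (-α * u k)
          ≤ ∑ k ∈ Finset.range N, ((1 + (3/4)*(α*K)^2) + (-α * u k)) :=
            Finset.sum_le_sum (fun k _ => hexp_le k)
        _ = (N:ℝ) * (1 + (3/4)*(α*K)^2) + (-α) * ∑ k ∈ Finset.range N, u k := by
            rw [Finset.sum_add_distrib, Finset.sum_const, Finset.card_range,
              nsmul_eq_mul, ← Finset.mul_sum]
        _ = (N:ℝ) * (1 + (3/4)*(α*K)^2) + -(α * ∑ k ∈ Finset.range N, u k) := by ring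
        _ ≤ (N:ℝ) := hfin
    calc ∑ k ∈ Finset.range N, (g (t + 2*Real.pi*k/2^n)) ^ (-α)
        = ∑ k ∈ Finset.range N, (ρ ^ (-α) * Real.exp (-α * u k)) :=
          Finset.sum_congr rfl (fun k _ => hrw k)
      _ = ρ ^ (-α) * ∑ k ∈ Finset.range N, Real.exp (-α * u k) := (Finset.mul_sum _ _ _).symm
      _ ≤ ρ ^ (-α) * (N:ℝ) :=
          mul_le_mul_of_nonneg_left hsum_exp (Real.rpow_pos_of_pos hρ _).le
      _ = (N:ℝ) * ρ ^ (-α) := mul_comm _ _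
  -- integration
  have contF : Continuous (fun t : ℝ => (g t) ^ (-α)) :=
    contg.rpow_const (fun t => Or.inl (gpos t).ne')
  have hint : ∀ s : ℝ, IntervalIntegrable (fun t : ℝ => (g (t + s)) ^ (-α))
      MeasureTheory.volume 0 (2*Real.pi) :=
    fun s => (contF.comp (continuous_id.add continuous_const)).intervalIntegrable _ _
  have hshift : ∀ s : ℝ, (∫ t in (0:ℝ)..(2*Real.pi), (g (t + s)) ^ (-α))
      = ∫ t in (0:ℝ)..(2*Real.pi), (g t) ^ (-α) := by
    intro s
    rw [intervalIntegral.integral_comp_add_right (fun τ => (g τ) ^ (-α)) s]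
    rw [zero_add, add_comm]
    have := hper.intervalIntegral_add_eq s 0
    rw [zero_add] at this
    exact this
  set I : ℝ := ∫ t in (0:ℝ)..(2*Real.pi), (g t) ^ (-α) with hI
  clear_value I
  have hmain : (N:ℝ) * I ≤ 2*Real.pi * ((N:ℝ) * ρ ^ (-α)) := by
    have h2 : (∫ t in (0:ℝ)..(2*Real.pi), ∑ k ∈ Finset.range N, (g (t + 2*Real.pi*k/2^n)) ^ (-α))
        = (N:ℝ) * I := by
      rw [intervalIntegral.integral_finset_sum
        (f := fun (k:ℕ) (t:ℝ) => g (t + 2*Real.pi*k/2^n) ^ (-α))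
        (fun k _ => hint (2*Real.pi*k/2^n))]
      calc ∑ k ∈ Finset.range N, ∫ t in (0:ℝ)..(2*Real.pi), (g (t + 2*Real.pi*k/2^n)) ^ (-α)
          = ∑ _k ∈ Finset.range N, I := Finset.sum_congr rfl (fun k _ => hshift _)
        _ = (N:ℝ) * I := by rw [Finset.sum_const, Finset.card_range, nsmul_eq_mul]
    have hfint : IntervalIntegrable
        (fun t : ℝ => ∑ k ∈ Finset.range N, (g (t + 2*Real.pi*k/2^n)) ^ (-α))
        MeasureTheory.volume 0 (2*Real.pi) :=
      (continuous_finset_sum (Finset.range N) (fun k _ =>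
        contF.comp (continuous_id.add continuous_const))).intervalIntegrable 0 (2*Real.pi)
    have h1 : (∫ t in (0:ℝ)..(2*Real.pi), ∑ k ∈ Finset.range N, (g (t + 2*Real.pi*k/2^n)) ^ (-α))
        ≤ ∫ _t in (0:ℝ)..(2*Real.pi), ((N:ℝ) * ρ ^ (-α)) :=
      intervalIntegral.integral_mono_on (by positivity) hfint intervalIntegrable_const
        (fun t _ => pointwise t)
    rw [h2, intervalIntegral.integral_const, smul_eq_mul, sub_zero] at h1
    exact h1
  have hIle : I ≤ 2*Real.pi * ρ ^ (-α) := by nlinarith [hmain, hNR]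
  have hpi : (0:ℝ) < 2*Real.pi := by positivity
  calc 1 / (2*Real.pi) * I ≤ 1 / (2*Real.pi) * (2*Real.pi * ρ ^ (-α)) := by
        apply mul_le_mul_of_nonneg_left hIle (by positivity)
    _ = ρ ^ (-α) := by field_simp
end

section
/- Let c₀ ∈ (1,∞) be the unique zero of ψ(t) = (t+1)ln(t+1) + (t−1)ln(t−1) − 2t in (1,∞). Let M > 0 and let r : ℝ → (0,∞) satisfy r(x) ≤ c₀|x| + M for all x ∈ ℝ with |x| > M. Then every lower semicontinuous function f : ℝ → (−∞,∞] with f > −∞ everywhere which satisfies liminf_{|x|→∞} f(x)/ln|x| ≥ 0 and is (λ,r)-supermedian is constant. -/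
open Filter MeasureTheory

/-- The interval mean `λ_{x,ρ}(f) = (1/(2ρ)) ∫_{x-ρ}^{x+ρ} f(s) ds` of an
`EReal`-valued function `f` on `ℝ`, computed as the supremum of the means of the
truncations `min (f, n)` (which agrees with the usual value for lower
semicontinuous `f > -∞`, by monotone convergence). -/
noncomputable def intervalMeanE (f : ℝ → EReal) (x ρ : ℝ) : EReal :=
  ⨆ n : ℕ, (((1 / (2 * ρ)) * ∫ s in (x - ρ)..(x + ρ),
      (f s ⊓ (n : EReal)).toReal : ℝ) : EReal)

/-- `ψ(t) = (t+1)ln(t+1) + (t-1)ln(t-1) - 2t`. -/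
noncomputable def psi (t : ℝ) : ℝ :=
  (t + 1) * Real.log (t + 1) + (t - 1) * Real.log (t - 1) - 2 * t

open Set intervalIntegral

lemma psi_one : psi 1 = 2 * Real.log 2 - 2 := by
  norm_num [psi]

lemma psi_one_nonpos : psi 1 ≤ 0 := by
  have h := Real.log_le_sub_one_of_pos (by norm_num : (0:ℝ) < 2)
  rw [psi_one]; linarith

lemma continuous_psi : Continuous psi := by
  have h1 : Continuous fun t : ℝ => (t + 1) * Real.log (t + 1) :=
    (Real.continuous_mul_log).comp (by continuity)
  have h2 : Continuous fun t : ℝ => (t - 1) * Real.log (t - 1) :=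
    (Real.continuous_mul_log).comp (by continuity)
  exact ((h1.add h2).sub (continuous_const.mul continuous_id))

lemma hasDerivAt_psi {t : ℝ} (ht : 1 < t) :
    HasDerivAt psi (Real.log (t + 1) + Real.log (t - 1)) t := by
  have h1 : HasDerivAt (fun t : ℝ => (t + 1) * Real.log (t + 1))
      (Real.log (t + 1) + 1) t := by
    have hlog : HasDerivAt (fun t : ℝ => Real.log (t + 1)) (1 / (t + 1)) t := by
      simpa [Function.comp_def] using ((Real.hasDerivAt_log (by linarith : t + 1 ≠ 0)).comp t
        ((hasDerivAt_id t).add_const 1))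
    have := ((hasDerivAt_id t).add_const 1).mul hlog
    refine this.congr_deriv ?_
    simp only [id]
    field_simp
  have h2 : HasDerivAt (fun t : ℝ => (t - 1) * Real.log (t - 1))
      (Real.log (t - 1) + 1) t := by
    have hlog : HasDerivAt (fun t : ℝ => Real.log (t - 1)) (1 / (t - 1)) t := by
      simpa [Function.comp_def] using ((Real.hasDerivAt_log (by linarith : t - 1 ≠ 0)).comp t
        ((hasDerivAt_id t).sub_const 1))
    have := ((hasDerivAt_id t).sub_const 1).mul hlog
    refine this.congr_deriv ?_
    have : t - 1 ≠ 0 := by linarith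
    simp only [id]
    field_simp
  have h3 : HasDerivAt (fun t : ℝ => 2 * t) 2 t := by
    simpa using (hasDerivAt_id t).const_mul 2
  have := (h1.add h2).sub h3
  refine this.congr_deriv ?_
  ring

lemma convexOn_psi : ConvexOn ℝ (Ici (1:ℝ)) psi := by
  have hint : interior (Ici (1:ℝ)) = Ioi 1 := interior_Ici
  apply MonotoneOn.convexOn_of_deriv (convex_Ici 1) continuous_psi.continuousOn
  · rw [hint]
    intro t ht
    exact (hasDerivAt_psi ht).differentiableAt.differentiableWithinAt
  · rw [hint]
    intro u hu v hv huv
    rw [(hasDerivAt_psi hu).deriv, (hasDerivAt_psi hv).deriv]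
    have hu1 : (1:ℝ) < u := hu
    have hv1 : (1:ℝ) < v := hv
    gcongr <;> linarith

lemma psi_nonpos {c₀ t : ℝ} (hc₀1 : 1 < c₀) (hc₀ : psi c₀ = 0)
    (ht1 : 1 ≤ t) (ht2 : t ≤ c₀) : psi t ≤ 0 := by
  rcases eq_or_lt_of_le ht2 with h | h
  · rw [h, hc₀]
  have hc1 : (0:ℝ) < c₀ - 1 := by linarith
  have hl : 0 ≤ (c₀ - t) / (c₀ - 1) := by
    apply div_nonneg <;> linarith
  have hm : 0 ≤ (t - 1) / (c₀ - 1) := by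
    apply div_nonneg <;> linarith
  have hs : (c₀ - t) / (c₀ - 1) + (t - 1) / (c₀ - 1) = 1 := by
    field_simp
    ring
  have := convexOn_psi.2 (self_mem_Ici) (by exact le_of_lt hc₀1 : c₀ ∈ Ici (1:ℝ))
      hl hm hs
  have heq : ((c₀ - t) / (c₀ - 1)) • (1:ℝ) + ((t - 1) / (c₀ - 1)) • c₀ = t := by
    simp only [smul_eq_mul]
    field_simp
    ring
  rw [heq] at this
  rw [hc₀] at this
  have h1 : ((c₀ - t) / (c₀ - 1)) * psi 1 ≤ 0 :=
    mul_nonpos_of_nonneg_of_nonpos hl psi_one_nonpos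
  simpa using this.trans (by simpa using h1)

lemma psi_le_slope {c₀ t : ℝ} (hc₀1 : 1 < c₀) (hc₀ : psi c₀ = 0)
    (ht1 : c₀ ≤ t) (ht2 : t ≤ c₀ + 1) : psi t ≤ (t - c₀) * psi (c₀ + 1) := by
  have hl : 0 ≤ c₀ + 1 - t := by linarith
  have hm : 0 ≤ t - c₀ := by linarith
  have hs : (c₀ + 1 - t) + (t - c₀) = 1 := by ring
  have := convexOn_psi.2 (by simp [mem_Ici]; linarith : c₀ ∈ Ici (1:ℝ))
      (by simp [mem_Ici]; linarith : c₀ + 1 ∈ Ici (1:ℝ)) hl hm hs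
  have heq : (c₀ + 1 - t) • c₀ + (t - c₀) • (c₀ + 1) = t := by
    simp [smul_eq_mul]; ring
  rw [heq, hc₀] at this
  simpa using this

/-- The core inequality: `x * ψ(t) ≤ M * max (ψ(c₀+1)) 0` for `1 < t ≤ c₀ + M/x`. -/
lemma core_psi_bound {c₀ M x t : ℝ} (hc₀1 : 1 < c₀) (hc₀ : psi c₀ = 0)
    (hM : 0 < M) (hx : M < x) (ht1 : 1 < t) (ht2 : t ≤ c₀ + M / x) :
    x * psi t ≤ M * max (psi (c₀ + 1)) 0 := by
  have hx0 : 0 < x := hM.trans hx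
  have hMx : M / x ≤ 1 := by
    rw [div_le_one hx0]; linarith
  rcases le_or_gt t c₀ with h | h
  · have := psi_nonpos hc₀1 hc₀ ht1.le h
    have : x * psi t ≤ 0 := mul_nonpos_of_nonneg_of_nonpos hx0.le this
    exact this.trans (by positivity)
  · have hb : psi t ≤ (t - c₀) * psi (c₀ + 1) :=
      psi_le_slope hc₀1 hc₀ h.le (by linarith)
    have hb2 : (t - c₀) * psi (c₀ + 1) ≤ (t - c₀) * max (psi (c₀ + 1)) 0 := by
      apply mul_le_mul_of_nonneg_left (le_max_left _ _) (by linarith)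
    have hb3 : (t - c₀) * max (psi (c₀ + 1)) 0 ≤ (M / x) * max (psi (c₀ + 1)) 0 := by
      apply mul_le_mul_of_nonneg_right (by linarith) (le_max_right _ _)
    calc x * psi t ≤ x * ((M / x) * max (psi (c₀ + 1)) 0) := by
          apply mul_le_mul_of_nonneg_left (hb.trans (hb2.trans hb3)) hx0.le
      _ = M * max (psi (c₀ + 1)) 0 := by field_simp



noncomputable def hfun (M β : ℝ) (s : ℝ) : ℝ :=
  Real.log (max |s| M) - β * max (1 - |s| / M) 0

lemma hfun_even (M β s : ℝ) : hfun M β (-s) = hfun M β s := by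
  simp [hfun, abs_neg]

lemma continuous_hfun {M : ℝ} (hM : 0 < M) (β : ℝ) : Continuous (hfun M β) := by
  apply Continuous.sub
  · apply Continuous.log
    · exact (continuous_abs.max continuous_const)
    · intro x
      have : M ≤ max |x| M := le_max_right _ _
      positivity
  · exact continuous_const.mul ((continuous_const.sub
      ((continuous_abs.div_const M))).max continuous_const)

lemma hfun_of_ge {M β s : ℝ} (hM : 0 < M) (hs : M ≤ s) : hfun M β s = Real.log s := by
  have h0 : 0 ≤ s := hM.le.trans hs
  have h1 : |s| = s := abs_of_nonneg h0
  have h2 : max |s| M = s := by rw [h1]; exact max_eq_left hs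
  have h3 : max (1 - |s| / M) 0 = 0 := by
    apply max_eq_right
    rw [h1]
    have : 1 ≤ s / M := (one_le_div hM).2 hs
    linarith
  simp [hfun, h2, h3]

lemma hfun_of_mem {M β s : ℝ} (hM : 0 < M) (h0 : 0 ≤ s) (h1 : s ≤ M) :
    hfun M β s = Real.log M - β * (1 - s / M) := by
  have ha : |s| = s := abs_of_nonneg h0
  have h2 : max |s| M = M := by rw [ha]; exact max_eq_right h1
  have h3 : max (1 - |s| / M) 0 = 1 - s / M := by
    rw [ha]; apply max_eq_left
    have : s / M ≤ 1 := (div_le_one hM).2 h1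
    linarith
  rw [hfun, h2, h3]

lemma hfun_le_tangent {M β x s : ℝ} (hM : 0 < M) (hβ : 1 ≤ β) (hx : M < x)
    (hs : 0 ≤ s) : hfun M β s ≤ Real.log x + s / x - 1 := by
  have hx0 : 0 < x := hM.trans hx
  rcases le_or_gt M s with h | h
  · rw [hfun_of_ge hM h]
    have hs0 : 0 < s := hM.trans_le h
    have hlog : Real.log (s / x) ≤ s / x - 1 :=
      Real.log_le_sub_one_of_pos (by positivity)
    rw [Real.log_div (by positivity) (by positivity)] at hlog
    linarith
  · rw [hfun_of_mem hM hs h.le]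
    have hA : 0 ≤ Real.log x - Real.log M :=
      sub_nonneg.2 (Real.log_le_log hM (hx.le))
    have hA2 : Real.log M - Real.log x ≤ M / x - 1 := by
      have := Real.log_le_sub_one_of_pos (show (0:ℝ) < M / x by positivity)
      rwa [Real.log_div (by positivity) (by positivity)] at this
    -- identity : goal ⟺ (1-s/M)*(A+β-1) + (s/M)*(A+M/x-1) ≥ 0
    have h1 : 0 ≤ 1 - s / M := by
      have : s / M ≤ 1 := (div_le_one hM).2 h.le
      linarith
    have h2 : 0 ≤ s / M := by positivity
    have key : (1 - s/M) * ((Real.log x - Real.log M) + β - 1)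
        + (s/M) * ((Real.log x - Real.log M) + M/x - 1)
        = (Real.log x + s/x - 1) - (Real.log M - β*(1-s/M)) := by
      field_simp
      ring
    have t1 := mul_nonneg h1 (by linarith : 0 ≤ (Real.log x - Real.log M) + β - 1)
    have t2 := mul_nonneg h2 (by linarith : 0 ≤ (Real.log x - Real.log M) + M / x - 1)
    linarith

lemma int_affine (p q u v : ℝ) :
    ∫ s in u..v, (p + q * s) = (v - u) * p + q * (v ^ 2 - u ^ 2) / 2 := by
  have hint : IntervalIntegrable (fun s : ℝ => q * s) MeasureTheory.volume u v :=
    Continuous.intervalIntegrable (by continuity) _ _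
  rw [intervalIntegral.integral_add intervalIntegrable_const hint,
    intervalIntegral.integral_const, intervalIntegral.integral_const_mul,
    integral_id]
  simp only [smul_eq_mul]
  ring

lemma int_tangent (x u v : ℝ) :
    ∫ s in u..v, (Real.log x + s / x - 1) =
      (v - u) * (Real.log x - 1) + (v ^ 2 - u ^ 2) / (2 * x) := by
  have : (fun s : ℝ => Real.log x + s / x - 1) =
      fun s => (Real.log x - 1) + (1 / x) * s := by
    funext s; ring
  rw [this, int_affine]
  ring

lemma int_hfun_0M {M : ℝ} (hM : 0 < M) (β : ℝ) :
    ∫ s in (0:ℝ)..M, hfun M β s = M * Real.log M - β * M / 2 := by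
  have hcongr : ∀ s ∈ Set.uIcc (0:ℝ) M, hfun M β s =
      (Real.log M - β) + (β / M) * s := by
    intro s hs
    rw [Set.uIcc_of_le hM.le] at hs
    rw [hfun_of_mem hM hs.1 hs.2]
    field_simp
    ring
  rw [intervalIntegral.integral_congr hcongr, int_affine]
  field_simp
  ring

lemma int_hfun_neg (M β a b : ℝ) :
    ∫ s in a..b, hfun M β s = ∫ s in (-b)..(-a), hfun M β s := by
  rw [← intervalIntegral.integral_comp_neg (fun s => hfun M β s)]
  simp [hfun_even]

lemma int_hfun_log {M β u v : ℝ} (hM : 0 < M) (hu : M ≤ u) (huv : u ≤ v) :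
    ∫ s in u..v, hfun M β s = v * Real.log v - u * Real.log u - v + u := by
  have hcongr : ∀ s ∈ Set.uIcc u v, hfun M β s = Real.log s := by
    intro s hs
    rw [Set.uIcc_of_le huv] at hs
    exact hfun_of_ge hM (hu.trans hs.1)
  rw [intervalIntegral.integral_congr hcongr,
    integral_log]

lemma hfun_abs (M β s : ℝ) : hfun M β |s| = hfun M β s := by
  simp [hfun, abs_abs]

lemma hfun_eq_log_abs {M β x : ℝ} (hM : 0 < M) (hx : M < |x|) :
    hfun M β x = Real.log |x| := by
  rw [← hfun_abs, hfun_of_ge hM hx.le]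

set_option maxHeartbeats 1000000 in
lemma hfun_supermedian_pos {c₀ M β x ρ : ℝ} (hc₀1 : 1 < c₀) (hc₀ : psi c₀ = 0)
    (hM : 0 < M) (hβ : 4 ≤ β) (hβ2 : max (psi (c₀ + 1)) 0 + 2 ≤ β)
    (hx : M < x) (hρ0 : 0 < ρ) (hρ : ρ ≤ c₀ * x + M) :
    ∫ s in (x - ρ)..(x + ρ), hfun M β s ≤ 2 * ρ * Real.log x := by
  have hx0 : 0 < x := hM.trans hx
  have hβ1 : (1:ℝ) ≤ β := by linarith
  have hintg : ∀ u v : ℝ, IntervalIntegrable (hfun M β) MeasureTheory.volume u v :=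
    fun u v => (continuous_hfun hM β).intervalIntegrable u v
  have hbM : M ≤ x + ρ := by linarith
  rcases le_or_gt ρ x with h0 | h1
  · -- ρ ≤ x : pointwise tangent bound
    have hmono : ∫ s in (x - ρ)..(x + ρ), hfun M β s ≤
        ∫ s in (x - ρ)..(x + ρ), (Real.log x + s / x - 1) := by
      apply intervalIntegral.integral_mono_on (by linarith) (hintg _ _)
        (Continuous.intervalIntegrable (by continuity) _ _)
      intro s hs
      exact hfun_le_tangent hM hβ1 hx (by linarith [hs.1])
    rw [int_tangent] at hmono
    have hsq : ((x + ρ) ^ 2 - (x - ρ) ^ 2) / (2 * x) = 2 * ρ := by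
      field_simp
      ring
    calc ∫ s in (x - ρ)..(x + ρ), hfun M β s
        ≤ (x + ρ - (x - ρ)) * (Real.log x - 1) + ((x + ρ) ^ 2 - (x - ρ) ^ 2) / (2 * x) := hmono
      _ = 2 * ρ * Real.log x := by rw [hsq]; ring
  · -- ρ > x
    set a := x - ρ with ha
    set b := x + ρ with hb
    set c := ρ - x with hc
    clear_value a b c
    have hc0 : 0 < c := by simp only [hc]; linarith
    have hac : a = -c := by simp only [ha, hc]; ring
    rcases le_or_gt ρ (x + M) with hA | hB
    · -- case A : x < ρ ≤ x + M
      have hcM : c ≤ M := by simp only [hc]; linarith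
      have hsplit : ∫ s in a..b, hfun M β s =
          (∫ s in a..(0:ℝ), hfun M β s) + (∫ s in (0:ℝ)..M, hfun M β s)
            + ∫ s in M..b, hfun M β s := by
        rw [intervalIntegral.integral_add_adjacent_intervals (hintg _ _) (hintg _ _),
          intervalIntegral.integral_add_adjacent_intervals (hintg _ _) (hintg _ _)]
      have e1 : ∫ s in a..(0:ℝ), hfun M β s =
          c * Real.log M - β * c + β * c ^ 2 / (2 * M) := by
        have hcongr : ∀ s ∈ Set.uIcc a (0:ℝ), hfun M β s =
            (Real.log M - β) + (-(β / M)) * s := by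
          intro s hs
          rw [Set.uIcc_of_le (by linarith : a ≤ (0:ℝ))] at hs
          rw [← hfun_even M β s, hfun_of_mem hM (by linarith [hs.2] : (0:ℝ) ≤ -s)
            (by rw [hac] at hs; linarith [hs.1] : -s ≤ M)]
          field_simp
          ring
        rw [intervalIntegral.integral_congr hcongr, int_affine, hac]
        field_simp
        ring
      have e1' : ∫ s in a..(0:ℝ), hfun M β s ≤ c * Real.log x - β * c / 2 := by
        rw [e1]
        have l1 : c * Real.log M ≤ c * Real.log x :=
          mul_le_mul_of_nonneg_left (Real.log_le_log hM hx.le) hc0.le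
        have l2 : β * c ^ 2 / (2 * M) ≤ β * c / 2 := by
          rw [div_le_div_iff₀ (by linarith) (by norm_num)]
          nlinarith [mul_nonneg (mul_nonneg (by linarith : (0:ℝ) ≤ β) hc0.le)
            (sub_nonneg.2 hcM)]
        linarith
      have e2 : ∫ s in (0:ℝ)..M, hfun M β s ≤ M * Real.log x - β * M / 2 := by
        rw [int_hfun_0M hM]
        have := mul_le_mul_of_nonneg_left (Real.log_le_log hM hx.le) hM.le
        linarith
      have e3 : ∫ s in M..b, hfun M β s ≤
          (b - M) * (Real.log x - 1) + (b ^ 2 - M ^ 2) / (2 * x) := by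
        have hmono : ∫ s in M..b, hfun M β s ≤
            ∫ s in M..b, (Real.log x + s / x - 1) := by
          apply intervalIntegral.integral_mono_on hbM (hintg _ _)
            (Continuous.intervalIntegrable (by fun_prop) _ _)
          intro s hs
          exact hfun_le_tangent hM hβ1 hx (by linarith [hs.1])
        rw [int_tangent] at hmono
        exact hmono
      have hbβ : b - M ≤ β * x := by
        have : b ≤ 2 * x + M := by simp only [hb]; linarith
        nlinarith
      have hD : ((b:ℝ) ^ 2 - M ^ 2) / (2 * x) * (2 * x) = b ^ 2 - M ^ 2 := by
        field_simp
      have hkey : -(β * c / 2) - β * M / 2 - (b - M) + (b ^ 2 - M ^ 2) / (2 * x) ≤ 0 := by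
        nlinarith [mul_le_mul_of_nonneg_right hbβ (by linarith : (0:ℝ) ≤ c + M),
          hD, hx0, hc0, hM]
      have expand : (c * Real.log x - β * c / 2) + (M * Real.log x - β * M / 2)
          + ((b - M) * (Real.log x - 1) + (b ^ 2 - M ^ 2) / (2 * x))
          = 2 * ρ * Real.log x
            + (-(β * c / 2) - β * M / 2 - (b - M) + (b ^ 2 - M ^ 2) / (2 * x)) := by
        rw [hc, hb]
        ring
      rw [hsplit]
      linarith [e1', e2, e3, hkey, expand]
    · -- case B : ρ > x + M
      have hcM : M ≤ c := by simp only [hc]; linarith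
      have haM : a ≤ -M := by rw [hac]; linarith
      have hsplit : ∫ s in a..b, hfun M β s =
          ((∫ s in a..(-M:ℝ), hfun M β s) + (∫ s in (-M:ℝ)..(0:ℝ), hfun M β s)
            + ∫ s in (0:ℝ)..M, hfun M β s) + ∫ s in M..b, hfun M β s := by
        rw [intervalIntegral.integral_add_adjacent_intervals (hintg _ _) (hintg _ _),
          intervalIntegral.integral_add_adjacent_intervals (hintg _ _) (hintg _ _),
          intervalIntegral.integral_add_adjacent_intervals (hintg _ _) (hintg _ _)]
      have e1 : ∫ s in a..(-M:ℝ), hfun M β s =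
          c * Real.log c - M * Real.log M - c + M := by
        rw [int_hfun_neg, hac]
        simp only [neg_neg]
        exact int_hfun_log hM le_rfl hcM
      have e2 : ∫ s in (-M:ℝ)..(0:ℝ), hfun M β s = M * Real.log M - β * M / 2 := by
        rw [int_hfun_neg]
        simp only [neg_zero, neg_neg]
        exact int_hfun_0M hM β
      have e3 : ∫ s in (0:ℝ)..M, hfun M β s = M * Real.log M - β * M / 2 :=
        int_hfun_0M hM β
      have e4 : ∫ s in M..b, hfun M β s = b * Real.log b - M * Real.log M - b + M :=
        int_hfun_log hM le_rfl hbM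
      set t := ρ / x with ht
      have ht1 : 1 < t := by
        rw [ht, lt_div_iff₀ hx0]
        linarith
      have ht2 : t ≤ c₀ + M / x := by
        rw [ht, div_le_iff₀ hx0] at *
        have : (c₀ + M / x) * x = c₀ * x + M := by field_simp
        rw [this]
        exact hρ
      have hc_eq : c = x * (t - 1) := by
        simp only [hc, ht]
        field_simp
      have hb_eq : b = x * (t + 1) := by
        simp only [hb, ht]
        field_simp
        ring
      have hlogc : Real.log c = Real.log x + Real.log (t - 1) := by
        rw [hc_eq, Real.log_mul hx0.ne' (by linarith : t - 1 ≠ 0)]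
      have hlogb : Real.log b = Real.log x + Real.log (t + 1) := by
        rw [hb_eq, Real.log_mul hx0.ne' (by linarith : t + 1 ≠ 0)]
      have hcore : x * psi t ≤ M * max (psi (c₀ + 1)) 0 :=
        core_psi_bound hc₀1 hc₀ hM hx ht1 ht2
      have hLβ : M * max (psi (c₀ + 1)) 0 ≤ M * (β - 2) := by
        apply mul_le_mul_of_nonneg_left (by linarith) hM.le
      have hkey : c * Real.log c + b * Real.log b - c - b + 2 * M - β * M
          - (b + c) * Real.log x = x * psi t + 2 * M - β * M := by
        rw [hlogc, hlogb, hc_eq, hb_eq]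
        simp only [psi]
        ring
      have hbc : b + c = 2 * ρ := by simp only [hb, hc]; ring
      rw [hsplit, e1, e2, e3, e4]
      have hfin : x * psi t + 2 * M - β * M ≤ 0 := by linarith
      have hbc2 : (b + c) * Real.log x = 2 * ρ * Real.log x := by rw [hbc]
      linarith [hkey, hbc2, hfin]

lemma hfun_supermedian {c₀ M β x ρ : ℝ} (hc₀1 : 1 < c₀) (hc₀ : psi c₀ = 0)
    (hM : 0 < M) (hβ : 4 ≤ β) (hβ2 : max (psi (c₀ + 1)) 0 + 2 ≤ β)
    (hx : M < |x|) (hρ0 : 0 < ρ) (hρ : ρ ≤ c₀ * |x| + M) :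
    ∫ s in (x - ρ)..(x + ρ), hfun M β s ≤ 2 * ρ * hfun M β x := by
  rw [hfun_eq_log_abs hM hx]
  rcases lt_or_ge 0 x with hpos | hneg
  · rw [abs_of_pos hpos] at *
    exact hfun_supermedian_pos hc₀1 hc₀ hM hβ hβ2 hx hρ0 hρ
  · have hxneg : x < 0 := by
      rcases lt_or_eq_of_le hneg with h | h
      · exact h
      · exfalso; subst h; simp only [abs_zero] at hx; linarith
    rw [abs_of_neg hxneg] at *
    have := hfun_supermedian_pos hc₀1 hc₀ hM hβ hβ2 hx hρ0 hρ
    rw [int_hfun_neg]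
    have h1 : -(x + ρ) = -x - ρ := by ring
    have h2 : -(x - ρ) = -x + ρ := by ring
    rw [h1, h2]
    exact this

lemma ereal_natCast_ne_top (n : ℕ) : ((n : ℕ) : EReal) ≠ ⊤ := by
  rw [← EReal.coe_coe_eq_natCast]
  exact EReal.coe_ne_top _

lemma ereal_natCast_ne_bot (n : ℕ) : ((n : ℕ) : EReal) ≠ ⊥ := by
  rw [← EReal.coe_coe_eq_natCast]
  exact EReal.coe_ne_bot _

/-- Key lemma: if `f ≥ φ` globally, `f x = φ x`, the interval mean of `f` at `x`
is `≤ f x` and the mean of `φ` is `≥ φ x`, then `f ≤ φ` on the open interval. -/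
lemma key_lemma (f : ℝ → EReal) (hf_lsc : LowerSemicontinuous f) (hf_bot : ∀ z, f z ≠ ⊥)
    {x ρ : ℝ} (hρ : 0 < ρ)
    (hmed : intervalMeanE f x ρ ≤ f x)
    (φ : ℝ → ℝ) (hφc : Continuous φ)
    (hφle : ∀ z, ((φ z : ℝ) : EReal) ≤ f z)
    (hfx : f x = ((φ x : ℝ) : EReal))
    (hint : 2 * ρ * φ x ≤ ∫ s in (x - ρ)..(x + ρ), φ s) :
    ∀ y ∈ Set.Ioo (x - ρ) (x + ρ), f y ≤ ((φ y : ℝ) : EReal) := by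
  have hab : x - ρ ≤ x + ρ := by linarith
  have hmeas : Measurable f := hf_lsc.measurable
  obtain ⟨B, hB⟩ := isCompact_Icc.exists_bound_of_continuousOn
    (s := Set.Icc (x - ρ) (x + ρ)) hφc.continuousOn
  set n₀ : ℕ := ⌈B⌉₊ + 1 with hn₀
  have hφlt : ∀ s ∈ Set.Icc (x - ρ) (x + ρ), φ s < (n₀ : ℝ) := by
    intro s hs
    have h1 : φ s ≤ B := (le_abs_self _).trans (hB s hs)
    have h2 : B ≤ (⌈B⌉₊ : ℝ) := Nat.le_ceil B
    have h3 : ((⌈B⌉₊ : ℝ)) < (n₀ : ℝ) := by rw [hn₀]; push_cast; linarith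
    linarith
  set g : ℝ → ℝ := fun s => (f s ⊓ ((n₀ : ℕ) : EReal)).toReal with hgdef
  have hne_bot : ∀ s, f s ⊓ ((n₀ : ℕ) : EReal) ≠ ⊥ := by
    intro s
    rw [← bot_lt_iff_ne_bot, lt_inf_iff]
    exact ⟨bot_lt_iff_ne_bot.2 (hf_bot s), bot_lt_iff_ne_bot.2 (ereal_natCast_ne_bot n₀)⟩
  have hne_top : ∀ s, f s ⊓ ((n₀ : ℕ) : EReal) ≠ ⊤ :=
    fun s => ne_top_of_le_ne_top (ereal_natCast_ne_top n₀) inf_le_right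
  have hgup : ∀ s, g s ≤ (n₀ : ℝ) := by
    intro s
    have := EReal.toReal_le_toReal (inf_le_right (a := f s) (b := ((n₀:ℕ) : EReal)))
      (hne_bot s) (ereal_natCast_ne_top n₀)
    rwa [← EReal.coe_coe_eq_natCast, EReal.toReal_coe] at this
  have hglb : ∀ s ∈ Set.Icc (x - ρ) (x + ρ), φ s ≤ g s := by
    intro s hs
    have h1 : ((φ s : ℝ) : EReal) ≤ f s ⊓ ((n₀:ℕ) : EReal) := by
      refine le_inf (hφle s) ?_
      rw [← EReal.coe_coe_eq_natCast, EReal.coe_le_coe_iff]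
      exact (hφlt s hs).le
    have := EReal.toReal_le_toReal h1 (EReal.coe_ne_bot _) (hne_top s)
    rwa [EReal.toReal_coe] at this
  have hg_meas : Measurable g := by
    apply Measurable.ereal_toReal
    exact hmeas.min measurable_const
  have hgi : IntervalIntegrable g MeasureTheory.volume (x - ρ) (x + ρ) := by
    constructor
    · apply MeasureTheory.Measure.integrableOn_of_bounded (M := (n₀ : ℝ) + B)
        measure_Ioc_lt_top.ne hg_meas.aestronglyMeasurable
      refine (MeasureTheory.ae_restrict_iff' measurableSet_Ioc).2 (MeasureTheory.ae_of_all _ ?_)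
      intro s hs
      have hs' : s ∈ Set.Icc (x - ρ) (x + ρ) := Set.Ioc_subset_Icc_self hs
      rw [Real.norm_eq_abs, abs_le]
      constructor
      · have h1 : -B ≤ φ s := by
          have := (abs_le.1 ((Real.norm_eq_abs _ ▸ hB s hs'))).1
          linarith
        have hBnn : 0 ≤ B := (abs_nonneg _).trans (Real.norm_eq_abs _ ▸ hB s hs')
        have := hglb s hs'
        have hn0 : (0:ℝ) ≤ n₀ := Nat.cast_nonneg _
        linarith
      · have hBnn : 0 ≤ B := (abs_nonneg _).trans (Real.norm_eq_abs _ ▸ hB s hs')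
        linarith [hgup s]
    · have : Set.Ioc (x + ρ) (x - ρ) = ∅ := Set.Ioc_eq_empty (by linarith)
      rw [MeasureTheory.IntegrableOn, this, MeasureTheory.Measure.restrict_empty]
      exact MeasureTheory.integrable_zero_measure
  have hφi : IntervalIntegrable φ MeasureTheory.volume (x - ρ) (x + ρ) :=
    hφc.intervalIntegrable _ _
  -- read off the hypothesis for n = n₀
  have hmed0 : (1 / (2 * ρ)) * (∫ s in (x - ρ)..(x + ρ), g s) ≤ φ x := by
    have h1 : (((1 / (2 * ρ)) * ∫ s in (x - ρ)..(x + ρ),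
        (f s ⊓ ((n₀:ℕ) : EReal)).toReal : ℝ) : EReal) ≤ f x := by
      refine le_trans ?_ hmed
      exact le_iSup (fun n : ℕ => (((1 / (2 * ρ)) * ∫ s in (x - ρ)..(x + ρ),
        (f s ⊓ ((n:ℕ) : EReal)).toReal : ℝ) : EReal)) n₀
    rw [hfx, EReal.coe_le_coe_iff] at h1
    exact h1
  have hIg : ∫ s in (x - ρ)..(x + ρ), g s ≤ 2 * ρ * φ x := by
    have h2ρ : (0:ℝ) < 2 * ρ := by linarith
    have := mul_le_mul_of_nonneg_left hmed0 h2ρ.le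
    calc ∫ s in (x - ρ)..(x + ρ), g s
        = (2 * ρ) * ((1 / (2 * ρ)) * ∫ s in (x - ρ)..(x + ρ), g s) := by
          field_simp
      _ ≤ (2 * ρ) * φ x := this
      _ = 2 * ρ * φ x := by ring
  have hsub : ∫ s in Set.Ioc (x - ρ) (x + ρ), (g s - φ s) ≤ 0 := by
    rw [← intervalIntegral.integral_of_le hab, intervalIntegral.integral_sub hgi hφi]
    linarith
  have hnn : ∀ᵐ s ∂(MeasureTheory.volume.restrict (Set.Ioc (x - ρ) (x + ρ))),
      0 ≤ g s - φ s := by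
    refine (MeasureTheory.ae_restrict_iff' measurableSet_Ioc).2 (MeasureTheory.ae_of_all _ ?_)
    intro s hs
    exact sub_nonneg.2 (hglb s (Set.Ioc_subset_Icc_self hs))
  have hInt : MeasureTheory.IntegrableOn (fun s => g s - φ s)
      (Set.Ioc (x - ρ) (x + ρ)) MeasureTheory.volume := hgi.1.sub hφi.1
  have hzero : ∫ s in Set.Ioc (x - ρ) (x + ρ), (g s - φ s) = 0 :=
    le_antisymm hsub (MeasureTheory.integral_nonneg_of_ae hnn)
  have haezero : (fun s => g s - φ s)
      =ᵐ[MeasureTheory.volume.restrict (Set.Ioc (x - ρ) (x + ρ))] 0 :=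
    (MeasureTheory.integral_eq_zero_iff_of_nonneg_ae hnn hInt).1 hzero
  have hae : ∀ᵐ s ∂MeasureTheory.volume, s ∈ Set.Ioc (x - ρ) (x + ρ) →
      f s = ((φ s : ℝ) : EReal) := by
    rw [← MeasureTheory.ae_restrict_iff' measurableSet_Ioc]
    filter_upwards [haezero, MeasureTheory.ae_restrict_mem measurableSet_Ioc] with s hs hsmem
    have hgs : g s = φ s := by
      have : g s - φ s = 0 := hs
      linarith
    have h1 : f s ⊓ ((n₀:ℕ) : EReal) = ((φ s : ℝ) : EReal) := by
      rw [← EReal.coe_toReal (hne_top s) (hne_bot s)]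
      exact congrArg _ hgs
    rcases le_or_gt (f s) (((n₀:ℕ)) : EReal) with hle | hlt
    · rwa [inf_eq_left.2 hle] at h1
    · exfalso
      rw [inf_eq_right.2 hlt.le] at h1
      have : ((φ s : ℝ) : EReal) < ((n₀:ℕ) : EReal) := by
        rw [← EReal.coe_coe_eq_natCast, EReal.coe_lt_coe_iff]
        exact hφlt s (Set.Ioc_subset_Icc_self hsmem)
      rw [h1] at this
      exact lt_irrefl _ this
  -- lsc + a.e. equality forces `f ≤ φ` on the open interval
  intro y hy
  by_contra hcon
  push_neg at hcon
  obtain ⟨t, ht1, ht2⟩ := EReal.lt_iff_exists_real_btwn.1 hcon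
  have hlsc : ∀ᶠ z in nhds y, ((t : ℝ) : EReal) < f z := hf_lsc y _ ht2
  have hφyt : φ y < t := EReal.coe_lt_coe_iff.1 ht1
  have hWn : ∀ᶠ z in nhds y, φ z < t := (hφc.tendsto y) (Iio_mem_nhds hφyt)
  have hIoon : ∀ᶠ z in nhds y, z ∈ Set.Ioo (x - ρ) (x + ρ) :=
    Filter.eventually_of_mem (isOpen_Ioo.mem_nhds hy) (fun z hz => hz)
  have hS : ∀ᶠ z in nhds y,
      (((t : ℝ) : EReal) < f z ∧ φ z < t ∧ z ∈ Set.Ioo (x - ρ) (x + ρ)) :=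
    hlsc.and (hWn.and hIoon)
  have hμS : MeasureTheory.volume {z | ((t : ℝ) : EReal) < f z ∧ φ z < t ∧
      z ∈ Set.Ioo (x - ρ) (x + ρ)} ≠ 0 := by
    have h1 : 0 < MeasureTheory.volume (interior {z | ((t : ℝ) : EReal) < f z ∧ φ z < t ∧
        z ∈ Set.Ioo (x - ρ) (x + ρ)}) :=
      isOpen_interior.measure_pos _ ⟨y, mem_interior_iff_mem_nhds.2 hS⟩
    exact (h1.trans_le (MeasureTheory.measure_mono interior_subset)).ne'
  have hfq : ∃ᵐ z ∂MeasureTheory.volume, z ∈ {z | ((t : ℝ) : EReal) < f z ∧ φ z < t ∧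
      z ∈ Set.Ioo (x - ρ) (x + ρ)} := MeasureTheory.frequently_ae_mem_iff.2 hμS
  obtain ⟨z, hzS, hzimp⟩ := (hfq.and_eventually hae).exists
  have hIoc : z ∈ Set.Ioc (x - ρ) (x + ρ) := Set.Ioo_subset_Ioc_self hzS.2.2
  have hfz : f z = ((φ z : ℝ) : EReal) := hzimp hIoc
  have h1 : ((t : ℝ) : EReal) < ((φ z : ℝ) : EReal) := hfz ▸ hzS.1
  have h2 : t < φ z := EReal.coe_lt_coe_iff.1 h1
  linarith [hzS.2.1]

lemma ereal_coe_sub_le_of_le_add {a : EReal} {u v : ℝ}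
    (h : ((u : ℝ) : EReal) ≤ a + ((v : ℝ) : EReal)) : ((u - v : ℝ) : EReal) ≤ a := by
  induction a using EReal.rec with
  | bot =>
    rw [EReal.bot_add] at h
    exact absurd h (by simp)
  | coe r =>
    rw [← EReal.coe_add, EReal.coe_le_coe_iff] at h
    exact EReal.coe_le_coe_iff.2 (by linarith)
  | top => exact le_top

lemma ereal_eq_coe_of_add_coe {a : EReal} {c d : ℝ}
    (h : a + ((c : ℝ) : EReal) = ((d : ℝ) : EReal)) : a = ((d - c : ℝ) : EReal) := by
  induction a using EReal.rec with
  | bot => rw [EReal.bot_add] at h; exact absurd h (by simp)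
  | coe r =>
    rw [← EReal.coe_add] at h
    have : r + c = d := EReal.coe_eq_coe_iff.1 h
    exact EReal.coe_eq_coe_iff.2 (by linarith)
  | top => rw [EReal.top_add_coe] at h; exact absurd h (by simp)

lemma ereal_le_of_forall_lt_real {t : ℝ} {a : EReal}
    (h : ∀ w : ℝ, w < t → ((w : ℝ) : EReal) ≤ a) : ((t : ℝ) : EReal) ≤ a := by
  by_contra hcon
  push_neg at hcon
  obtain ⟨w, hw1, hw2⟩ := EReal.lt_iff_exists_real_btwn.1 hcon
  exact absurd (h w (EReal.coe_lt_coe_iff.1 hw2)) (not_le.2 hw1)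

lemma ereal_le_of_forall_real_lt {a b : EReal}
    (h : ∀ t : ℝ, ((t : ℝ) : EReal) < b → ((t : ℝ) : EReal) ≤ a) : b ≤ a := by
  by_contra hcon
  push_neg at hcon
  obtain ⟨t, ht1, ht2⟩ := EReal.lt_iff_exists_real_btwn.1 hcon
  exact absurd (h t ht2) (not_le.2 ht1)

/-- A lower semicontinuous `EReal`-valued function attains its minimum on `[a,b]`. -/
lemma lsc_min_on_Icc {g : ℝ → EReal} (hg : LowerSemicontinuous g) {a b : ℝ} (hab : a ≤ b) :
    ∃ x₀ ∈ Set.Icc a b, ∀ y ∈ Set.Icc a b, g x₀ ≤ g y := by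
  by_contra hcon
  push_neg at hcon
  have hcover : Set.Icc a b ⊆ ⋃ y ∈ Set.Icc a b, {x | g y < g x} := by
    intro x hx
    obtain ⟨y, hy, hlt⟩ := hcon x hx
    exact Set.mem_biUnion hy hlt
  obtain ⟨J, hJsub, hJfin, hJcover⟩ := isCompact_Icc.elim_finite_subcover_image
    (fun y _ => hg.isOpen_preimage (g y)) hcover
  have hJne : J.Nonempty := by
    have h := hJcover (Set.left_mem_Icc.2 hab)
    obtain ⟨y, hy, _⟩ := Set.mem_iUnion₂.1 h
    exact ⟨y, hy⟩
  obtain ⟨y₀, hy₀J, hy₀min⟩ := Set.exists_min_image J g hJfin hJne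
  have hy₀Icc : y₀ ∈ Set.Icc a b := hJsub hy₀J
  obtain ⟨y₁, hy₁J, hlt⟩ := Set.mem_iUnion₂.1 (hJcover hy₀Icc)
  exact absurd (hy₀min y₁ hy₁J) (not_le.2 hlt)

/-- Spreading a minimum over a preconnected open set. -/
lemma fill_preconnected {g : ℝ → EReal} (hg : LowerSemicontinuous g) {m : EReal}
    (hmin : ∀ z, m ≤ g z) {s : Set ℝ} (hs : IsPreconnected s) (hso : IsOpen s)
    (hopen : ∀ y ∈ s, g y = m → ∃ δ > 0, ∀ z ∈ Set.Ioo (y - δ) (y + δ), g z = m)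
    (hne : ∃ y ∈ s, g y = m) : ∀ y ∈ s, g y = m := by
  set u := interior {z | g z = m} with hu
  set v := {z | m < g z} with hv
  have hv_open : IsOpen v := hg.isOpen_preimage m
  have hmem_u : ∀ y ∈ s, g y = m → y ∈ u := by
    intro y hy hgy
    obtain ⟨δ, hδ, hδall⟩ := hopen y hy hgy
    apply mem_interior.2
    exact ⟨Set.Ioo (y - δ) (y + δ), fun z hz => hδall z hz, isOpen_Ioo,
      by constructor <;> [linarith; linarith]⟩
  by_contra hconall
  push_neg at hconall
  obtain ⟨y₁, hy₁s, hy₁⟩ := hconall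
  have hsub : s ⊆ u ∪ v := by
    intro y hy
    rcases eq_or_lt_of_le (hmin y) with h | h
    · exact Or.inl (hmem_u y hy h.symm)
    · exact Or.inr h
  obtain ⟨w, hwmem⟩ := hs u v isOpen_interior hv_open hsub
    (by obtain ⟨y, hy, hgy⟩ := hne; exact ⟨y, hy, hmem_u y hy hgy⟩)
    (⟨y₁, hy₁s, lt_of_le_of_ne (hmin y₁) (Ne.symm hy₁)⟩)
  have hwu : w ∈ interior {z | g z = m} := hwmem.2.1
  have h1' : w ∈ {z | g z = m} := interior_subset hwu
  have h1 : g w = m := h1'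
  have h2 : m < g w := hwmem.2.2
  rw [h1] at h2
  exact lt_irrefl _ h2

lemma step1 (f : ℝ → EReal) (hf_bot : ∀ z, f z ≠ ⊥)
    (hf_liminf : 0 ≤ Filter.liminf
      (fun x : ℝ => f x / ((Real.log |x| : ℝ) : EReal))
      (Filter.comap (fun x : ℝ => |x|) Filter.atTop))
    {ε : ℝ} (hε : 0 < ε) (K : ℝ) :
    ∃ N : ℝ, K ≤ N ∧ 2 ≤ N ∧
      ∀ y : ℝ, N ≤ |y| → ((-ε * Real.log |y| : ℝ) : EReal) ≤ f y := by
  have hlt : ((-ε : ℝ) : EReal) < Filter.liminf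
      (fun x : ℝ => f x / ((Real.log |x| : ℝ) : EReal))
      (Filter.comap (fun x : ℝ => |x|) Filter.atTop) := by
    refine lt_of_lt_of_le ?_ hf_liminf
    have : ((-ε : ℝ) : EReal) < ((0 : ℝ) : EReal) := EReal.coe_lt_coe_iff.2 (by linarith)
    rwa [EReal.coe_zero] at this
  have hev := Filter.eventually_lt_of_lt_liminf hlt
  have hev2 : ∀ᶠ x : ℝ in Filter.comap (fun x => |x|) Filter.atTop, max K 2 ≤ |x| :=
    Filter.preimage_mem_comap (Filter.mem_atTop (max K 2))
  have hev3 := hev.and hev2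
  rw [Filter.eventually_iff, Filter.mem_comap] at hev3
  obtain ⟨t, htt, hsub⟩ := hev3
  rw [Filter.mem_atTop_sets] at htt
  obtain ⟨N₀, hN₀⟩ := htt
  refine ⟨max (max K 2) N₀, le_trans (le_max_left _ _) (le_max_left _ _),
    le_trans (le_max_right _ _) (le_max_left _ _), ?_⟩
  intro y hy
  have hyt : |y| ∈ t := hN₀ _ (le_trans (le_max_right _ _) hy)
  have hP := hsub hyt
  obtain ⟨hP1, hP2⟩ := hP
  have h2y : (2:ℝ) ≤ |y| := le_trans (le_max_right _ _) hP2
  have hL : 0 < Real.log |y| := Real.log_pos (by linarith)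
  by_cases htop : f y = ⊤
  · rw [htop]; exact le_top
  · have hcoe : f y = (((f y).toReal : ℝ) : EReal) := (EReal.coe_toReal htop (hf_bot y)).symm
    rw [hcoe] at hP1 ⊢
    rw [← EReal.coe_div] at hP1
    have h1 : -ε < (f y).toReal / Real.log |y| := EReal.coe_lt_coe_iff.1 hP1
    rw [lt_div_iff₀ hL] at h1
    exact EReal.coe_le_coe_iff.2 (by linarith)

lemma exists_center (c₀ M β : ℝ) (hc₀1 : 1 < c₀) (hc₀ : psi c₀ = 0) (hM : 0 < M)
    (hβ4 : 4 ≤ β) (hβm : max (psi (c₀ + 1)) 0 + 2 ≤ β)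
    (r : ℝ → ℝ) (hr_pos : ∀ x, 0 < r x)
    (hr : ∀ x : ℝ, M < |x| → r x ≤ c₀ * |x| + M)
    (f : ℝ → EReal) (hf_lsc : LowerSemicontinuous f) (hf_bot : ∀ x, f x ≠ ⊥)
    (hf_liminf : 0 ≤ Filter.liminf
      (fun x : ℝ => f x / ((Real.log |x| : ℝ) : EReal))
      (Filter.comap (fun x : ℝ => |x|) Filter.atTop))
    (hf_med : ∀ x : ℝ, intervalMeanE f x (r x) ≤ f x)
    {p : ℝ} (hp : f p ≠ ⊤) {ε : ℝ} (hε : 0 < ε) :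
    ∃ x₀ : ℝ, |x₀| ≤ M ∧ f x₀ ≠ ⊤ ∧
      ∀ z : ℝ, (((f x₀).toReal + ε * hfun M β x₀ - ε * hfun M β z : ℝ) : EReal) ≤ f z := by
  obtain ⟨N, hNK, hN2, hN⟩ := step1 f hf_bot hf_liminf (half_pos hε) M
  set H := hfun M β with hHdef
  have hHcont : Continuous H := continuous_hfun hM β
  set G : ℝ → EReal := fun z => f z + ((ε * H z : ℝ) : EReal) with hGdef
  have hGlsc : LowerSemicontinuous G := by
    apply LowerSemicontinuous.add' hf_lsc
      ((continuous_coe_real_ereal.comp (continuous_const.mul hHcont : Continuous fun w => ε * H w)).lowerSemicontinuous)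
    intro z
    apply EReal.continuousAt_add
    · exact Or.inr (EReal.coe_ne_bot _)
    · exact Or.inr (EReal.coe_ne_top _)
  have hGne_bot : ∀ z, G z ≠ ⊥ := by
    intro z
    simp only [hGdef]
    rw [Ne, EReal.add_eq_bot_iff]
    push_neg
    exact ⟨hf_bot z, EReal.coe_ne_bot _⟩
  have hfp_coe : f p = (((f p).toReal : ℝ) : EReal) := (EReal.coe_toReal hp (hf_bot p)).symm
  set Gp : ℝ := (f p).toReal + ε * H p with hGpdef
  have hGp : G p = ((Gp : ℝ) : EReal) := by
    simp only [hGdef, hGpdef]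
    rw [EReal.coe_add, ← hfp_coe]
  set R := max (max N |p|) (Real.exp ((2 / ε) * (Gp + 1))) with hRdef
  have hRN : N ≤ R := le_trans (le_max_left _ _) (le_max_left _ _)
  have hRp : |p| ≤ R := le_trans (le_max_right _ _) (le_max_left _ _)
  have hR0 : 0 < R := lt_of_lt_of_le (Real.exp_pos _) (le_max_right _ _)
  have hRlog : (2 / ε) * (Gp + 1) ≤ Real.log R := by
    have h1 : Real.exp ((2 / ε) * (Gp + 1)) ≤ R := le_max_right _ _
    have := Real.log_le_log (Real.exp_pos _) h1
    rwa [Real.log_exp] at this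
  have hMR : M ≤ R := le_trans hNK hRN
  have hboundary : ∀ y, R < |y| → G p < G y := by
    intro y hy
    have hyN : N ≤ |y| := le_trans hRN hy.le
    have hyM : M < |y| := lt_of_le_of_lt hMR hy
    have hHy : H y = Real.log |y| := hfun_eq_log_abs hM hyM
    have hf_lb : ((-(ε / 2) * Real.log |y| : ℝ) : EReal) ≤ f y := hN y hyN
    have hGy : ((((ε / 2) * Real.log |y|) : ℝ) : EReal) ≤ G y := by
      have h2 := add_le_add_left hf_lb (((ε * H y : ℝ) : EReal))
      rw [← EReal.coe_add] at h2
      have heq : -(ε / 2) * Real.log |y| + ε * H y = (ε / 2) * Real.log |y| := by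
        rw [hHy]; ring
      rw [heq] at h2
      exact h2
    have hlog1 : Gp + 1 ≤ (ε / 2) * Real.log R := by
      have := mul_le_mul_of_nonneg_left hRlog (by linarith : (0:ℝ) ≤ ε / 2)
      have heq : (ε / 2) * ((2 / ε) * (Gp + 1)) = Gp + 1 := by field_simp
      linarith [heq ▸ this]
    have hloglt : Real.log R < Real.log |y| := Real.log_lt_log hR0 hy
    have hlt : Gp < (ε / 2) * Real.log |y| := by nlinarith
    calc G p = ((Gp : ℝ) : EReal) := hGp
      _ < ((((ε / 2) * Real.log |y|) : ℝ) : EReal) := EReal.coe_lt_coe_iff.2 hlt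
      _ ≤ G y := hGy
  obtain ⟨x₀, hx₀mem, hx₀min⟩ := lsc_min_on_Icc hGlsc (by linarith : -R ≤ R)
  have hglob : ∀ z, G x₀ ≤ G z := by
    intro z
    rcases le_or_gt |z| R with h | h
    · exact hx₀min z (abs_le.1 h)
    · exact le_trans (hx₀min p (abs_le.1 hRp)) (hboundary z h).le
  have hGx₀top : G x₀ ≠ ⊤ := by
    intro hcon
    have := hglob p
    rw [hcon, hGp, top_le_iff] at this
    exact EReal.coe_ne_top _ this
  have hGx₀coe : G x₀ = (((G x₀).toReal : ℝ) : EReal) :=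
    (EReal.coe_toReal hGx₀top (hGne_bot x₀)).symm
  set m₀ := (G x₀).toReal with hm₀def
  have hglob' : ∀ z, ((m₀ : ℝ) : EReal) ≤ f z + ((ε * H z : ℝ) : EReal) := by
    intro z
    have := hglob z
    rw [hGx₀coe] at this
    exact this
  have hfx₀top : f x₀ ≠ ⊤ := by
    intro hcon
    apply hGx₀top
    simp only [hGdef]
    rw [hcon, EReal.top_add_coe]
  have hfx₀coe : f x₀ = (((m₀ - ε * H x₀ : ℝ)) : EReal) := by
    apply ereal_eq_coe_of_add_coe
    rw [← hGx₀coe]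
  by_cases hx₀M : |x₀| ≤ M
  · refine ⟨x₀, hx₀M, hfx₀top, ?_⟩
    intro z
    have h1 : (((m₀ - ε * H z : ℝ)) : EReal) ≤ f z := ereal_coe_sub_le_of_le_add (hglob' z)
    have h2 : (f x₀).toReal = m₀ - ε * H x₀ := by rw [hfx₀coe]; exact EReal.toReal_coe _
    have h3 : (f x₀).toReal + ε * H x₀ - ε * H z = m₀ - ε * H z := by rw [h2]; ring
    rw [h3]
    exact h1
  · exfalso
    push_neg at hx₀M
    have hspread : ∀ y, M < |y| → G y = ((m₀ : ℝ) : EReal) →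
        ∀ z ∈ Set.Ioo (y - r y) (y + r y), G z = ((m₀ : ℝ) : EReal) := by
      intro y hyM hGy z hz
      have hρpos := hr_pos y
      have hρle := hr y hyM
      have hfy : f y = (((m₀ - ε * H y : ℝ)) : EReal) := by
        apply ereal_eq_coe_of_add_coe
        rw [← hGy]
      set φ : ℝ → ℝ := fun w => m₀ - ε * H w with hφdef
      have hφc : Continuous φ := continuous_const.sub (continuous_const.mul hHcont : Continuous fun w => ε * H w)
      have hφle : ∀ w, ((φ w : ℝ) : EReal) ≤ f w :=
        fun w => ereal_coe_sub_le_of_le_add (hglob' w)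
      have hint : 2 * (r y) * φ y ≤ ∫ s in (y - r y)..(y + r y), φ s := by
        have hHint : ∫ s in (y - r y)..(y + r y), H s ≤ 2 * r y * H y :=
          hfun_supermedian hc₀1 hc₀ hM hβ4 hβm hyM hρpos hρle
        have hsplit : ∫ s in (y - r y)..(y + r y), φ s
            = (y + r y - (y - r y)) * m₀ - ε * ∫ s in (y - r y)..(y + r y), H s := by
          simp only [hφdef]
          rw [intervalIntegral.integral_sub intervalIntegrable_const
            ((hHcont.intervalIntegrable _ _).const_mul ε),
            intervalIntegral.integral_const, intervalIntegral.integral_const_mul]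
          simp [smul_eq_mul]
        rw [hsplit]
        have := mul_le_mul_of_nonneg_left hHint hε.le
        simp only [hφdef]
        nlinarith
      have hkey := key_lemma f hf_lsc hf_bot hρpos (hf_med y) φ hφc hφle hfy hint
      have h1 := hkey z hz
      have h2 := hφle z
      have hfz : f z = ((φ z : ℝ) : EReal) := le_antisymm h1 h2
      simp only [hGdef]
      rw [hfz, ← EReal.coe_add]
      refine EReal.coe_eq_coe_iff.2 ?_
      simp only [hφdef]
      ring
    have hGx₀m : G x₀ = ((m₀ : ℝ) : EReal) := hGx₀coe
    rcases lt_abs.1 hx₀M with hpos | hneg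
    · -- x₀ > M : fill (M, ∞)
      have hall : ∀ y ∈ Set.Ioi M, G y = ((m₀ : ℝ) : EReal) := by
        apply fill_preconnected hGlsc (fun z => by rw [← hGx₀m]; exact hglob z)
          isPreconnected_Ioi isOpen_Ioi
        · intro y hy hGy
          refine ⟨r y, hr_pos y, ?_⟩
          have hyM : M < |y| := by
            rw [abs_of_pos (lt_trans hM hy)]; exact hy
          exact hspread y hyM hGy
        · exact ⟨x₀, hpos, hGx₀m⟩
      -- contradiction at large Y
      set Y := max (max N (M + 1)) (Real.exp ((2 / ε) * (|m₀| + 1))) with hYdef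
      have hYN : N ≤ Y := le_trans (le_max_left _ _) (le_max_left _ _)
      have hYM1 : M + 1 ≤ Y := le_trans (le_max_right _ _) (le_max_left _ _)
      have hYe : Real.exp ((2 / ε) * (|m₀| + 1)) ≤ Y := le_max_right _ _
      have hYM : M < Y := by linarith
      have hY0 : 0 < Y := by linarith
      have hYabs : |Y| = Y := abs_of_pos hY0
      have hGY := hall Y hYM
      have hfY : f Y = (((m₀ - ε * H Y : ℝ)) : EReal) := by
        apply ereal_eq_coe_of_add_coe
        rw [← hGY]
      have hHY : H Y = Real.log Y := by
        rw [hHdef, hfun_eq_log_abs hM (by rw [hYabs]; exact hYM), hYabs]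
      have hflb := hN Y (by rw [hYabs]; exact hYN)
      rw [hfY, EReal.coe_le_coe_iff, hYabs] at hflb
      have hlogY : (2 / ε) * (|m₀| + 1) ≤ Real.log Y := by
        have := Real.log_le_log (Real.exp_pos _) hYe
        rwa [Real.log_exp] at this
      have h1 : |m₀| + 1 ≤ (ε / 2) * Real.log Y := by
        have := mul_le_mul_of_nonneg_left hlogY (by linarith : (0:ℝ) ≤ ε / 2)
        have heq : (ε / 2) * ((2 / ε) * (|m₀| + 1)) = |m₀| + 1 := by field_simp
        linarith [heq ▸ this]
      rw [hHY] at hflb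
      have h2 : (ε / 2) * Real.log Y ≤ m₀ := by linarith
      linarith [le_abs_self m₀]
    · -- x₀ < -M : fill (-∞, -M)
      have hx₀neg : x₀ < -M := by linarith
      have hall : ∀ y ∈ Set.Iio (-M), G y = ((m₀ : ℝ) : EReal) := by
        apply fill_preconnected hGlsc (fun z => by rw [← hGx₀m]; exact hglob z)
          isPreconnected_Iio isOpen_Iio
        · intro y hy hGy
          refine ⟨r y, hr_pos y, ?_⟩
          have hyneg : y < 0 := by have : y < -M := hy; linarith
          have hyM : M < |y| := by
            rw [abs_of_neg hyneg]
            have : y < -M := hy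
            linarith
          exact hspread y hyM hGy
        · exact ⟨x₀, hx₀neg, hGx₀m⟩
      set Y := max (max N (M + 1)) (Real.exp ((2 / ε) * (|m₀| + 1))) with hYdef
      have hYN : N ≤ Y := le_trans (le_max_left _ _) (le_max_left _ _)
      have hYM1 : M + 1 ≤ Y := le_trans (le_max_right _ _) (le_max_left _ _)
      have hYe : Real.exp ((2 / ε) * (|m₀| + 1)) ≤ Y := le_max_right _ _
      have hYM : M < Y := by linarith
      have hY0 : 0 < Y := by linarith
      have hYabs : |(-Y)| = Y := by rw [abs_neg, abs_of_pos hY0]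
      have hGY := hall (-Y) (by simp only [Set.mem_Iio]; linarith)
      have hfY : f (-Y) = (((m₀ - ε * H (-Y) : ℝ)) : EReal) := by
        apply ereal_eq_coe_of_add_coe
        rw [← hGY]
      have hHY : H (-Y) = Real.log Y := by
        rw [hHdef, hfun_eq_log_abs hM (by rw [hYabs]; exact hYM), hYabs]
      have hflb := hN (-Y) (by rw [hYabs]; exact hYN)
      rw [hfY, EReal.coe_le_coe_iff, hYabs] at hflb
      have hlogY : (2 / ε) * (|m₀| + 1) ≤ Real.log Y := by
        have := Real.log_le_log (Real.exp_pos _) hYe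
        rwa [Real.log_exp] at this
      have h1 : |m₀| + 1 ≤ (ε / 2) * Real.log Y := by
        have := mul_le_mul_of_nonneg_left hlogY (by linarith : (0:ℝ) ≤ ε / 2)
        have heq : (ε / 2) * ((2 / ε) * (|m₀| + 1)) = |m₀| + 1 := by field_simp
        linarith [heq ▸ this]
      rw [hHY] at hflb
      have h2 : (ε / 2) * Real.log Y ≤ m₀ := by linarith
      linarith [le_abs_self m₀]

/-- Proposition 1.4.1 (liminf version): with `c₀` the unique zero of `ψ` in `(1,∞)`,
if `r(x) ≤ c₀|x| + M` for `|x| > M`, then every lower semicontinuous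
`(λ,r)`-supermedian function `f : ℝ → (-∞,∞]` with
`liminf_{|x|→∞} f(x)/ln|x| ≥ 0` is constant. -/
theorem stmt3 (c₀ M : ℝ) (hc₀1 : 1 < c₀) (hc₀ : psi c₀ = 0) (hM : 0 < M)
    (r : ℝ → ℝ) (hr_pos : ∀ x, 0 < r x)
    (hr : ∀ x : ℝ, M < |x| → r x ≤ c₀ * |x| + M)
    (f : ℝ → EReal) (hf_lsc : LowerSemicontinuous f) (hf_bot : ∀ x, f x ≠ ⊥)
    (hf_liminf : 0 ≤ Filter.liminf
      (fun x : ℝ => f x / ((Real.log |x| : ℝ) : EReal))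
      (Filter.comap (fun x : ℝ => |x|) Filter.atTop))
    (hf_med : ∀ x : ℝ, intervalMeanE f x (r x) ≤ f x) :
    ∃ C : EReal, ∀ x, f x = C := by

  by_cases htop : ∀ z, f z = ⊤
  · exact ⟨⊤, htop⟩
  push_neg at htop
  obtain ⟨p, hp⟩ := htop
  set β : ℝ := 4 + 2 * max (psi (c₀ + 1)) 0 with hβdef
  have hmax0 : 0 ≤ max (psi (c₀ + 1)) 0 := le_max_right _ _
  have hβ4 : 4 ≤ β := by simp only [hβdef]; linarith
  have hβm : max (psi (c₀ + 1)) 0 + 2 ≤ β := by simp only [hβdef]; linarith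
  set H := hfun M β with hHdef
  have hHcont : Continuous H := continuous_hfun hM β
  obtain ⟨BH, hBH⟩ := isCompact_Icc.exists_bound_of_continuousOn
    (s := Set.Icc (-M) M) hHcont.continuousOn
  have main : ∀ k : ℕ, ∃ x₀ : ℝ, |x₀| ≤ M ∧ f x₀ ≠ ⊤ ∧
      ∀ z : ℝ, (((f x₀).toReal + (1 / ((k : ℝ) + 1)) * H x₀
        - (1 / ((k : ℝ) + 1)) * H z : ℝ) : EReal) ≤ f z := by
    intro k
    exact exists_center c₀ M β hc₀1 hc₀ hM hβ4 hβm r hr_pos hr f hf_lsc hf_bot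
      hf_liminf hf_med hp (by positivity : (0:ℝ) < 1 / ((k : ℝ) + 1))
  choose xs hxs1 hxs2 hxs3 using main
  have hxsmem : ∀ k, xs k ∈ Set.Icc (-M) M := fun k => abs_le.1 (hxs1 k)
  obtain ⟨xst, hxstmem, σ, hσmono, hσtend⟩ := isCompact_Icc.tendsto_subseq hxsmem
  -- `f` attains its global minimum at `xst`
  have hminstar : ∀ z, f xst ≤ f z := by
    intro z
    apply ereal_le_of_forall_real_lt
    intro t ht
    have hev : ∀ᶠ w in nhds xst, ((t : ℝ) : EReal) < f w := hf_lsc xst _ ht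
    have hev2 : ∀ᶠ k in Filter.atTop, ((t : ℝ) : EReal) < f (xs (σ k)) :=
      hσtend.eventually hev
    apply ereal_le_of_forall_lt_real
    intro w hw
    have hc0 : 0 ≤ BH + |H z| := by
      have := hBH (xs 0) (hxsmem 0)
      have h0 : 0 ≤ BH := le_trans (norm_nonneg _) this
      positivity
    have harch : ∀ᶠ k : ℕ in Filter.atTop, (BH + |H z|) / ((k : ℝ) + 1) < t - w := by
      have h0 : Filter.Tendsto (fun k : ℕ => (BH + |H z|) * (1 / ((k : ℝ) + 1)))
          Filter.atTop (nhds ((BH + |H z|) * 0)) :=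
        tendsto_one_div_add_atTop_nhds_zero_nat.const_mul _
      rw [mul_zero] at h0
      have := h0.eventually_lt_const (by linarith : (0:ℝ) < t - w)
      filter_upwards [this] with k hk
      calc (BH + |H z|) / ((k : ℝ) + 1) = (BH + |H z|) * (1 / ((k : ℝ) + 1)) := by
            rw [mul_one_div]
        _ < t - w := hk
    obtain ⟨k, hk1, hk2⟩ := (hev2.and harch).exists
    set j := σ k with hjdef
    have hjk : (k : ℝ) ≤ (j : ℝ) := by exact_mod_cast hσmono.le_apply
    have hk2' : (BH + |H z|) / ((j : ℝ) + 1) < t - w := by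
      refine lt_of_le_of_lt ?_ hk2
      apply div_le_div_of_nonneg_left hc0 (by positivity) (by linarith)
    have hfj : f (xs j) = (((f (xs j)).toReal : ℝ) : EReal) :=
      (EReal.coe_toReal (hxs2 j) (hf_bot _)).symm
    have htv : t < (f (xs j)).toReal := by
      have := hk1
      rw [hfj] at this
      exact EReal.coe_lt_coe_iff.1 this
    have h3 := hxs3 j z
    set εj : ℝ := 1 / ((j : ℝ) + 1) with hεjdef
    have hεj0 : 0 < εj := by positivity
    have hHj : |H (xs j)| ≤ BH := by
      have := hBH (xs j) (hxsmem j)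
      rwa [Real.norm_eq_abs] at this
    have hwle : w ≤ (f (xs j)).toReal + εj * H (xs j) - εj * H z := by
      have e1 : εj * H (xs j) ≥ -(εj * BH) := by
        have := neg_abs_le (H (xs j))
        nlinarith
      have e2 : εj * H z ≤ εj * |H z| := by
        have := le_abs_self (H z)
        nlinarith
      have e3 : εj * (BH + |H z|) < t - w := by
        have : εj * (BH + |H z|) = (BH + |H z|) / ((j : ℝ) + 1) := by
          rw [hεjdef]; ring
        rw [this]; exact hk2'
      linarith
    calc ((w : ℝ) : EReal)
        ≤ (((f (xs j)).toReal + εj * H (xs j) - εj * H z : ℝ) : EReal) :=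
          EReal.coe_le_coe_iff.2 hwle
      _ ≤ f z := h3
  have hfst_top : f xst ≠ ⊤ := by
    intro hcon
    exact hp (top_le_iff.1 (hcon ▸ hminstar p))
  set m' := (f xst).toReal with hm'def
  have hfstcoe : f xst = ((m' : ℝ) : EReal) := (EReal.coe_toReal hfst_top (hf_bot xst)).symm
  have hminstar' : ∀ z, ((m' : ℝ) : EReal) ≤ f z := fun z => by
    rw [← hfstcoe]; exact hminstar z
  have hall : ∀ y ∈ Set.univ, f y = ((m' : ℝ) : EReal) := by
    apply fill_preconnected hf_lsc hminstar' isPreconnected_univ isOpen_univ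
    · intro y _ hfy
      refine ⟨r y, hr_pos y, ?_⟩
      intro z hz
      have hint : 2 * (r y) * (fun _ : ℝ => m') y ≤
          ∫ s in (y - r y)..(y + r y), (fun _ : ℝ => m') s := by
        rw [intervalIntegral.integral_const]
        simp only [smul_eq_mul]
        exact le_of_eq (by ring)
      have hkey := key_lemma f hf_lsc hf_bot (hr_pos y) (hf_med y)
        (fun _ => m') continuous_const (fun w => hminstar' w) hfy hint
      exact le_antisymm (hkey z hz) (hminstar' z)
    · exact ⟨xst, Set.mem_univ _, hfstcoe⟩
  exact ⟨((m' : ℝ) : EReal), fun x => hall x (Set.mem_univ x)⟩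
end

section
/- Define f : ℝ² → ℝ by f(x) := max{1 − |x|, 0} and r : ℝ² → (0,∞) by r(x) := |x| + 2 + (|x| + 1)^{−1}. Then (a) for every x ∈ ℝ², σ_{x,r(x)}(f) = 0 ≤ f(x) (so f is a non-constant bounded (σ,r)-supermedian function), and (b) for all x, y ∈ ℝ² with x ≠ y, |r(x) − r(y)| < |x − y|. -/
open Filter MeasureTheory

/-- For `f(x) := (1 - |x|)⁺` and `r(x) := |x| + 2 + (|x|+1)⁻¹` on `ℝ² = ℂ`:
(a) `σ_{x,r(x)}(f) = 0 ≤ f(x)` for every `x` (so the bounded function `f` is a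
non-constant `(σ,r)`-supermedian function), and
(b) `|r(x) - r(y)| < |x - y|` for all `x ≠ y`. -/
theorem stmt11 :
    let f : ℂ → ℝ := fun x => max (1 - ‖x‖) 0
    let r : ℂ → ℝ := fun x => ‖x‖ + 2 + (‖x‖ + 1)⁻¹
    (∀ x : ℂ, (1 / (2 * Real.pi)) * (∫ t in (0:ℝ)..(2 * Real.pi),
        f (x + (r x : ℂ) * Complex.exp (t * Complex.I))) = 0 ∧ 0 ≤ f x) ∧
    (∃ x y : ℂ, f x ≠ f y) ∧
    (∀ x y : ℂ, x ≠ y → |r x - r y| < ‖x - y‖) := by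
  intro f r
  refine ⟨?_, ⟨0, 2, by norm_num [f]⟩, ?_⟩
  · intro x
    have hinv : (0:ℝ) < (‖x‖ + 1)⁻¹ := by positivity
    have hr : (1:ℝ) + ‖x‖ < r x := by
      simp only [r]; linarith [norm_nonneg x]
    have h0 : ∀ t : ℝ, f (x + (r x : ℂ) * Complex.exp (t * Complex.I)) = 0 := by
      intro t
      have he : ‖Complex.exp ((t:ℝ) * Complex.I)‖ = 1 :=
        Complex.norm_exp_ofReal_mul_I t
      have hw : ‖(r x : ℂ) * Complex.exp ((t:ℝ) * Complex.I)‖ = r x := by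
        rw [norm_mul, he, mul_one, Complex.norm_real, Real.norm_eq_abs, abs_of_pos]
        linarith [norm_nonneg x]
      have hle : r x - ‖x‖ ≤ ‖x + (r x : ℂ) * Complex.exp ((t:ℝ) * Complex.I)‖ := by
        have := norm_add_le (x + (r x : ℂ) * Complex.exp ((t:ℝ) * Complex.I)) (-x)
        rw [show x + (r x : ℂ) * Complex.exp ((t:ℝ) * Complex.I) + -x
            = (r x : ℂ) * Complex.exp ((t:ℝ) * Complex.I) from by ring,
          hw, norm_neg] at this
        linarith
      have : (1:ℝ) ≤ ‖x + (r x : ℂ) * Complex.exp ((t:ℝ) * Complex.I)‖ := by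
        linarith
      simp only [f, max_eq_right_iff]
      linarith
    constructor
    · simp only [h0, intervalIntegral.integral_zero, mul_zero]
    · exact le_max_right _ _
  · intro x y hxy
    set a := ‖x‖ with ha
    set b := ‖y‖ with hb
    have ha0 : 0 ≤ a := norm_nonneg x
    have hb0 : 0 ≤ b := norm_nonneg y
    have ha1 : (0:ℝ) < a + 1 := by linarith
    have hb1 : (0:ℝ) < b + 1 := by linarith
    have hc1 : ((a+1)*(b+1))⁻¹ ≤ 1 := by
      rw [inv_le_one_iff₀]; right; nlinarith
    have hc0 : (0:ℝ) < ((a+1)*(b+1))⁻¹ := by positivity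
    have hkey : r x - r y = (a - b) * (1 - ((a+1)*(b+1))⁻¹) := by
      simp only [r, ← ha, ← hb]
      field_simp
      ring
    have habs : |r x - r y| = |a - b| * (1 - ((a+1)*(b+1))⁻¹) := by
      rw [hkey, abs_mul, abs_of_nonneg (by linarith : (0:ℝ) ≤ 1 - ((a+1)*(b+1))⁻¹)]
    have hxy' : 0 < ‖x - y‖ := by
      rw [norm_pos_iff]; exact sub_ne_zero_of_ne hxy
    have hab : |a - b| ≤ ‖x - y‖ := abs_norm_sub_norm_le x y
    rw [habs]
    rcases eq_or_ne a b with h | h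
    · simp [h, hxy']
    · have : |a - b| * (1 - ((a+1)*(b+1))⁻¹) < |a - b| := by
        have hab0 : 0 < |a - b| := abs_pos.mpr (sub_ne_zero_of_ne h)
        nlinarith
      linarith
end

section
/- Define f : ℝ² → ℝ by f(x) := max{1 − |x|, 0} and r : ℝ² → (0,∞) by r(x) := 3 if |x| < 2 and r(x) := 1 if |x| ≥ 2. Then for every x ∈ ℝ², σ_{x,r(x)}(f) = 0 ≤ f(x); hence f is a non-constant bounded (σ,r)-supermedian function (here r is not continuous). -/
open Filter MeasureTheory

/-- For `f(x) := (1 - |x|)⁺` on `ℝ² = ℂ` and the (discontinuous) radius function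
`r(x) := 3` if `|x| < 2`, `r(x) := 1` if `|x| ≥ 2`: `σ_{x,r(x)}(f) = 0 ≤ f(x)` for
every `x`, so the bounded function `f` is a non-constant `(σ,r)`-supermedian
function. -/
theorem stmt12 :
    let f : ℂ → ℝ := fun x => max (1 - ‖x‖) 0
    let r : ℂ → ℝ := fun x => if ‖x‖ < 2 then 3 else 1
    (∀ x : ℂ, (1 / (2 * Real.pi)) * (∫ t in (0:ℝ)..(2 * Real.pi),
        f (x + (r x : ℂ) * Complex.exp (t * Complex.I))) = 0 ∧ 0 ≤ f x) ∧
    (∃ x y : ℂ, f x ≠ f y) := by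
  intro f r
  refine ⟨fun x => ⟨?_, le_max_right _ _⟩, ⟨0, 2, by simp [f]⟩⟩
  have h : ∀ t : ℝ, f (x + (r x : ℂ) * Complex.exp (t * Complex.I)) = 0 := by
    intro t
    have he : ‖Complex.exp ((t : ℂ) * Complex.I)‖ = 1 :=
      Complex.norm_exp_ofReal_mul_I t
    have habs : ‖(r x : ℂ) * Complex.exp ((t : ℂ) * Complex.I)‖ = r x := by
      rw [norm_mul, he, mul_one, Complex.norm_real, Real.norm_eq_abs, abs_of_pos]
      simp only [r]
      split <;> norm_num
    have h1 : 1 ≤ ‖x + (r x : ℂ) * Complex.exp ((t : ℂ) * Complex.I)‖ := by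
      have hb := norm_sub_norm_le ((r x : ℂ) * Complex.exp ((t : ℂ) * Complex.I)) (-x)
      have hb' := norm_sub_norm_le (-x) ((r x : ℂ) * Complex.exp ((t : ℂ) * Complex.I))
      simp only [sub_neg_eq_add, neg_sub_left, norm_neg, norm_neg,
        habs] at hb hb'
      rw [add_comm x]
      simp only [r] at *
      by_cases hx : ‖x‖ < 2
      · simp only [hx, if_true] at hb ⊢; linarith
      · simp only [hx, if_false] at hb' ⊢; push_neg at hx; linarith
    simp only [f]
    rw [max_eq_right (by linarith)]
  simp [h]
end

section
/- For x = (x₁, x₂) ∈ ℝ², define f(x) := min{1, |x₁|^{−1}} (with f(x) := 1 when x₁ = 0) and r(x) := 6 max{1, x₁²}. Then f is a continuous non-constant function with 0 ≤ f ≤ 1, r is continuous with liminf_{|x|→∞}(r(x) − |x|) = −∞, and f is (σ,r)-supermedian: σ_{x,r(x)}(f) ≤ f(x) for every x ∈ ℝ². -/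
open Filter MeasureTheory Real intervalIntegral
set_option maxHeartbeats 1000000

noncomputable def gg : ℝ → ℝ := fun s => (max 1 |s|)⁻¹

lemma gg_nonneg (s : ℝ) : 0 ≤ gg s := by unfold gg; positivity

lemma gg_le_one (s : ℝ) : gg s ≤ 1 := by
  unfold gg
  rw [inv_le_one_iff₀]; right; exact le_max_left _ _

lemma gg_cont : Continuous gg := by
  unfold gg
  apply Continuous.inv₀
  · exact continuous_const.max continuous_abs
  · intro x; positivity

lemma gg_le_inv {s : ℝ} (hs : 0 < |s|) : gg s ≤ |s|⁻¹ := by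
  unfold gg
  exact inv_anti₀ hs (le_max_right _ _)


lemma pi_cube : π^3 < 32 := by
  have h := pi_lt_d2
  have h0 := pi_pos
  nlinarith [sq_nonneg π, mul_pos h0 h0]

lemma sin_pi12 : (1:ℝ)/6 ≤ sin (π/12) := by
  have h1 : (0:ℝ) < π/12 := by positivity
  have h2 : π/12 ≤ 1 := by nlinarith [pi_lt_d2]
  have h3 := sin_gt_sub_cube h1
  have h4 : (π/12)^3/4 = π^3/6912 := by ring
  nlinarith [pi_gt_d6, pi_cube]

lemma sin_5pi24 : 3*π/20 ≤ sin (5*π/24) := by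
  have h1 : (0:ℝ) < 5*π/24 := by positivity
  have h2 : 5*π/24 ≤ 1 := by nlinarith [pi_lt_d2]
  have h3 := sin_gt_sub_cube h1
  have h4 : (5*π/24)^3/4 = 125*π^3/55296 := by ring
  nlinarith [pi_gt_d6, pi_cube, pi_pos]

lemma sin_lower {θ : ℝ} (h1 : 5*π/24 ≤ θ) (h2 : θ ≤ 19*π/24) : sin (5*π/24) ≤ sin θ := by
  rcases le_total θ (π/2) with h | h
  · exact sin_le_sin_of_le_of_le_pi_div_two (by nlinarith [pi_pos]) h h1
  · rw [← Real.sin_pi_sub θ]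
    exact sin_le_sin_of_le_of_le_pi_div_two (by nlinarith [pi_pos]) (by nlinarith) (by nlinarith)

lemma t0_bounds (c : ℝ) (hc : |c| ≤ 1/6) : 5*π/12 ≤ arccos (-c) ∧ arccos (-c) ≤ 7*π/12 := by
  obtain ⟨hcl, hcr⟩ := abs_le.1 hc
  set t₀ := arccos (-c) with ht₀def
  have hcos : cos t₀ = -c := cos_arccos (by linarith) (by linarith)
  have ht₀0 : 0 ≤ t₀ := arccos_nonneg _
  have ht₀pi : t₀ ≤ π := arccos_le_pi _
  have hpi : (0:ℝ) < π := pi_pos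
  refine ⟨?_, ?_⟩
  ·
    by_contra h; push_neg at h
    have hlt := cos_lt_cos_of_nonneg_of_le_pi ht₀0 (by nlinarith) h
    rw [hcos] at hlt
    have : cos (5*π/12) = sin (π/12) := by
      rw [show (5:ℝ)*π/12 = π/2 - π/12 by ring, Real.cos_pi_div_two_sub]
    nlinarith [sin_pi12]
  · by_contra h; push_neg at h
    have hlt := cos_lt_cos_of_nonneg_of_le_pi (by positivity) ht₀pi h
    rw [hcos] at hlt
    have : cos (7*π/12) = -sin (π/12) := by
      rw [show (7:ℝ)*π/12 = π - (π/2 - π/12) by ring, Real.cos_pi_sub, Real.cos_pi_div_two_sub]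
    nlinarith [sin_pi12]

lemma key (c : ℝ) (hc : |c| ≤ 1/6) {t : ℝ} (ht0 : 0 ≤ t) (htpi : t ≤ π) :
    3/10 * |t - arccos (-c)| ≤ |cos t + c| := by
  obtain ⟨hcl, hcr⟩ := abs_le.1 hc
  set t₀ := arccos (-c) with ht₀def
  have hcos : cos t₀ = -c := cos_arccos (by linarith) (by linarith)
  have ht₀0 : 0 ≤ t₀ := arccos_nonneg _
  have ht₀pi : t₀ ≤ π := arccos_le_pi _
  have hpi : (0:ℝ) < π := pi_pos
  obtain ⟨h5, h7⟩ := t0_bounds c hc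
  rw [← ht₀def] at h5 h7
  have heq : cos t + c = cos t - cos t₀ := by rw [hcos]; ring
  rw [heq, Real.cos_sub_cos]
  rw [abs_mul, abs_mul, abs_neg, abs_two]
  have hmid : sin (5*π/24) ≤ |sin ((t + t₀)/2)| := by
    have hθ1 : 5*π/24 ≤ (t + t₀)/2 := by linarith
    have hθ2 : (t + t₀)/2 ≤ 19*π/24 := by linarith
    exact le_trans (sin_lower hθ1 hθ2) (le_abs_self _)
  have habs : |t - t₀|/π ≤ |sin ((t - t₀)/2)| := by
    have hu : |t - t₀| ≤ π := abs_sub_le_iff.2 ⟨by linarith, by linarith⟩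
    have h1 : |sin ((t - t₀)/2)| = sin (|t - t₀|/2) := by
      rcases le_total t₀ t with h | h
      · rw [abs_of_nonneg (show (0:ℝ) ≤ sin ((t - t₀)/2) from
          sin_nonneg_of_nonneg_of_le_pi (by linarith) (by linarith)),
          abs_of_nonneg (by linarith : (0:ℝ) ≤ t - t₀)]
      · have hs : sin ((t - t₀)/2) ≤ 0 := by
          have h2 : (0:ℝ) ≤ sin ((t₀ - t)/2) :=
            sin_nonneg_of_nonneg_of_le_pi (by linarith) (by linarith)
          have heq2 : (t - t₀)/2 = -((t₀ - t)/2) := by ring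
          rw [heq2, Real.sin_neg]; linarith
        rw [abs_of_nonpos hs, abs_of_nonpos (by linarith : t - t₀ ≤ 0),
          show -(t - t₀)/2 = -((t - t₀)/2) by ring, Real.sin_neg]
    rw [h1]
    have h2 := Real.mul_le_sin (x := |t - t₀|/2) (by positivity) (by linarith)
    calc |t - t₀|/π = 2/π * (|t - t₀|/2) := by field_simp
    _ ≤ sin (|t - t₀|/2) := h2
  calc 3/10 * |t - t₀| = 2 * (3*π/20) * (|t - t₀|/π) := by field_simp; ring
  _ ≤ 2 * |sin ((t + t₀)/2)| * (|t - t₀|/π) := by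
      have := le_trans sin_5pi24 hmid
      have h0 : 0 ≤ |t - t₀|/π := by positivity
      nlinarith
  _ ≤ 2 * |sin ((t + t₀)/2)| * |sin ((t - t₀)/2)| := by
      apply mul_le_mul_of_nonneg_left habs (by positivity)

lemma amgm {u a : ℝ} (hu : 0 < u) (ha : 0 < a) : u⁻¹ ≤ (4*a)⁻¹ + a/u^2 := by
  have h : (4*a)⁻¹ + a/u^2 - u⁻¹ = (u - 2*a)^2/(4*a*u^2) := by field_simp; ring
  nlinarith [div_nonneg (sq_nonneg (u - 2*a)) (by positivity : (0:ℝ) ≤ 4*a*u^2)]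

lemma circle_avg (b : ℝ) :
    ∫ t in (0:ℝ)..(2*π), gg (b + 6 * max 1 (b^2) * Real.cos t) ≤ 2 * π * gg b := by
  have hpi := pi_pos
  have hpi314 := pi_gt_d6
  set ρ : ℝ := 6 * max 1 (b^2) with hρdef
  have hρ6 : 6 ≤ ρ := by
    have : (1:ℝ) ≤ max 1 (b^2) := le_max_left _ _
    nlinarith
  have hρ0 : 0 < ρ := by linarith
  set h : ℝ → ℝ := fun t => gg (b + ρ * Real.cos t) with hhdef
  have hcont : Continuous h :=
    gg_cont.comp (continuous_const.add (continuous_const.mul Real.continuous_cos))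
  have hint : ∀ p q : ℝ, IntervalIntegrable h volume p q := fun p q =>
    hcont.intervalIntegrable p q
  rcases le_or_gt |b| 1 with hb | hb
  · have hgb : gg b = 1 := by unfold gg; rw [max_eq_left hb, inv_one]
    rw [hgb, mul_one]
    calc ∫ t in (0:ℝ)..(2*π), h t ≤ ∫ _t in (0:ℝ)..(2*π), (1:ℝ) :=
          integral_mono_on (by linarith) (hint _ _) intervalIntegrable_const
            (fun t _ => gg_le_one _)
    _ = 2 * π := by simp
  · set a : ℝ := |b| with hadef
    have ha1 : 1 < a := hb
    have ha0 : 0 < a := by linarith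
    have hsa : Real.sqrt a ≤ a := by
      have h1 : Real.sqrt a ≤ Real.sqrt (a^2) := Real.sqrt_le_sqrt (by nlinarith)
      rwa [Real.sqrt_sq ha0.le] at h1
    have hsa0 : 0 < Real.sqrt a := Real.sqrt_pos.2 ha0
    have hb2 : (1:ℝ) ≤ b^2 := by nlinarith [sq_abs b]
    have hρa : ρ = 6 * a^2 := by rw [hρdef, max_eq_right hb2, hadef, sq_abs]
    have hgb : gg b = a⁻¹ := by unfold gg; rw [max_eq_right (le_of_lt hb)]
    set c : ℝ := b/ρ with hcdef
    have hc : |c| ≤ 1/6 := by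
      rw [hcdef, abs_div, abs_of_pos hρ0, hρa, div_le_div_iff₀ (by positivity) (by norm_num)]
      nlinarith
    set t₀ : ℝ := arccos (-c) with ht₀def
    obtain ⟨ht₀5, ht₀7⟩ := t0_bounds c hc
    set B : ℝ := 10 * Real.sqrt a / (3 * ρ) with hBdef
    have hB0 : 0 < B := by positivity
    have hB59 : B ≤ 5/9 := by
      rw [hBdef, hρa, div_le_div_iff₀ (by positivity) (by norm_num)]
      nlinarith
    have hsplit1 : 0 ≤ t₀ - B := by linarith
    have hsplit2 : t₀ + B ≤ π := by linarith
    -- pointwise tail bound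
    have tail_bound : ∀ t : ℝ, 0 ≤ t → t ≤ π → B ≤ |t - t₀| →
        h t ≤ (4*a)⁻¹ + B^2/(t - t₀)^2 := by
      intro t ht0 htpi htB
      have hkey := key c hc ht0 htpi
      have hbval : b + ρ * Real.cos t = ρ * (Real.cos t + c) := by
        rw [hcdef]; field_simp; ring
      have habs : |b + ρ * Real.cos t| = ρ * |Real.cos t + c| := by
        rw [hbval, abs_mul, abs_of_pos hρ0]
      set u : ℝ := ρ * (3/10 * |t - t₀|) with hudef
      have htt0 : 0 < |t - t₀| := lt_of_lt_of_le hB0 htB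
      have hu_pos : 0 < u := by positivity
      have hu_le : u ≤ |b + ρ * Real.cos t| := by
        rw [habs]; exact mul_le_mul_of_nonneg_left hkey hρ0.le
      have h1 : h t ≤ u⁻¹ := by
        have hgg := gg_le_inv (lt_of_lt_of_le hu_pos hu_le)
        exact le_trans hgg (inv_anti₀ hu_pos hu_le)
      have h2 := amgm hu_pos ha0
      have h3 : a/u^2 = B^2/(t - t₀)^2 := by
        have hsq : Real.sqrt a ^ 2 = a := Real.sq_sqrt ha0.le
        have hu2 : u^2 = 9/100 * ρ^2 * (t - t₀)^2 := by
          rw [hudef, show (ρ*(3/10*|t - t₀|))^2 = 9/100*ρ^2*|t - t₀|^2 by ring, sq_abs]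
        have hB2 : B^2 = 100 * a / (9 * ρ^2) := by
          rw [hBdef, div_pow, mul_pow, hsq]; ring
        rw [hu2, hB2]
        have hne : (t - t₀) ≠ 0 := abs_pos.1 htt0
        field_simp
      calc h t ≤ u⁻¹ := h1
      _ ≤ (4*a)⁻¹ + a/u^2 := h2
      _ = (4*a)⁻¹ + B^2/(t - t₀)^2 := by rw [h3]
    -- middle bound
    have m1 : ∫ t in (t₀-B)..(t₀+B), h t ≤ 2*B := by
      calc ∫ t in (t₀-B)..(t₀+B), h t ≤ ∫ _t in (t₀-B)..(t₀+B), (1:ℝ) :=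
            integral_mono_on (by linarith) (hint _ _) intervalIntegrable_const
              (fun t _ => gg_le_one _)
      _ = 2*B := by rw [intervalIntegral.integral_const, smul_eq_mul, mul_one]; ring
    -- left tail
    have l1 : ∫ t in (0:ℝ)..(t₀-B), h t ≤ (t₀-B) * (4*a)⁻¹ + B := by
      have hcont2 : ContinuousOn (fun t => (4*a)⁻¹ + B^2/(t - t₀)^2) (Set.uIcc 0 (t₀-B)) := by
        apply continuousOn_const.add
        apply ContinuousOn.div continuousOn_const (by fun_prop)
        intro t ht
        rw [Set.uIcc_of_le hsplit1] at ht
        exact pow_ne_zero _ (sub_ne_zero.2 (by linarith [ht.2]))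
      have hintr : IntervalIntegrable (fun t => (4*a)⁻¹ + B^2/(t - t₀)^2) volume 0 (t₀-B) :=
        hcont2.intervalIntegrable
      have hmono : ∫ t in (0:ℝ)..(t₀-B), h t
          ≤ ∫ t in (0:ℝ)..(t₀-B), ((4*a)⁻¹ + B^2/(t - t₀)^2) := by
        apply integral_mono_on hsplit1 (hint _ _) hintr
        intro t ht
        refine tail_bound t ht.1 (by linarith [ht.2]) ?_
        rw [abs_sub_comm, abs_of_nonneg (by linarith [ht.2])]
        linarith [ht.2]
      have hF : ∀ t ∈ Set.uIcc (0:ℝ) (t₀-B),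
          HasDerivAt (fun s => (4*a)⁻¹ * s + B^2 * (t₀ - s)⁻¹) ((4*a)⁻¹ + B^2/(t - t₀)^2) t := by
        intro t ht
        rw [Set.uIcc_of_le hsplit1] at ht
        have hne : t₀ - t ≠ 0 := ne_of_gt (by linarith [ht.2])
        have d1 : HasDerivAt (fun s : ℝ => t₀ - s) (-1) t := (hasDerivAt_id t).const_sub t₀
        have d2 := (d1.inv hne).const_mul (B^2)
        have d3 := (hasDerivAt_id t).const_mul ((4*a)⁻¹)
        have d4 := d3.add d2
        refine d4.congr_deriv ?_
        simp only [id_eq, mul_one, neg_neg]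
        rw [show (t₀-t)^2 = (t-t₀)^2 by ring, mul_one_div]
      have hval := integral_eq_sub_of_hasDerivAt hF hintr
      rw [hval] at hmono
      have he : t₀ - (t₀ - B) = B := by ring
      rw [he, sub_zero] at hmono
      have hBB : B^2 * B⁻¹ = B := by field_simp [pow_two]
      have ht₀pos : 0 < t₀ := by linarith
      have hpos : 0 ≤ B^2 * t₀⁻¹ := by positivity
      calc ∫ t in (0:ℝ)..(t₀-B), h t
          ≤ (4*a)⁻¹ * (t₀-B) + B^2 * B⁻¹ - ((4*a)⁻¹ * 0 + B^2 * t₀⁻¹) := hmono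
      _ ≤ (t₀-B) * (4*a)⁻¹ + B := by rw [hBB]; nlinarith
    -- right tail
    have r1 : ∫ t in (t₀+B)..π, h t ≤ (π - t₀ - B) * (4*a)⁻¹ + B := by
      have hcont2 : ContinuousOn (fun t => (4*a)⁻¹ + B^2/(t - t₀)^2) (Set.uIcc (t₀+B) π) := by
        apply continuousOn_const.add
        apply ContinuousOn.div continuousOn_const (by fun_prop)
        intro t ht
        rw [Set.uIcc_of_le hsplit2] at ht
        exact pow_ne_zero _ (sub_ne_zero.2 (by linarith [ht.1]))
      have hintr : IntervalIntegrable (fun t => (4*a)⁻¹ + B^2/(t - t₀)^2) volume (t₀+B) π :=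
        hcont2.intervalIntegrable
      have hmono : ∫ t in (t₀+B)..π, h t
          ≤ ∫ t in (t₀+B)..π, ((4*a)⁻¹ + B^2/(t - t₀)^2) := by
        apply integral_mono_on hsplit2 (hint _ _) hintr
        intro t ht
        refine tail_bound t (by linarith [ht.1]) ht.2 ?_
        rw [abs_of_nonneg (by linarith [ht.1])]
        linarith [ht.1]
      have hF : ∀ t ∈ Set.uIcc (t₀+B) π,
          HasDerivAt (fun s => (4*a)⁻¹ * s - B^2 * (s - t₀)⁻¹) ((4*a)⁻¹ + B^2/(t - t₀)^2) t := by
        intro t ht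
        rw [Set.uIcc_of_le hsplit2] at ht
        have hne : t - t₀ ≠ 0 := ne_of_gt (by linarith [ht.1])
        have d1 : HasDerivAt (fun s : ℝ => s - t₀) 1 t := (hasDerivAt_id t).sub_const t₀
        have d2 := (d1.inv hne).const_mul (B^2)
        have d3 := (hasDerivAt_id t).const_mul ((4*a)⁻¹)
        have d4 := d3.sub d2
        refine d4.congr_deriv ?_
        simp only [id_eq, mul_one]
        rw [show -(1:ℝ)/(t-t₀)^2 = -(1/(t-t₀)^2) by ring]
        rw [mul_neg, sub_neg_eq_add, mul_one_div]
      have hval := integral_eq_sub_of_hasDerivAt hF hintr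
      rw [hval] at hmono
      have he : t₀ + B - t₀ = B := by ring
      rw [he] at hmono
      have hBB : B^2 * B⁻¹ = B := by field_simp [pow_two]
      have hπt₀ : 0 < π - t₀ := by linarith
      have hpos : 0 ≤ B^2 * (π - t₀)⁻¹ := by positivity
      calc ∫ t in (t₀+B)..π, h t
          ≤ (4*a)⁻¹ * π - B^2 * (π - t₀)⁻¹ - ((4*a)⁻¹ * (t₀+B) - B^2 * B⁻¹) := hmono
      _ ≤ (π - t₀ - B) * (4*a)⁻¹ + B := by rw [hBB]; nlinarith
    -- assemble half-period
    have e1 : ∫ t in (0:ℝ)..π, h t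
        = (∫ t in (0:ℝ)..(t₀-B), h t) + (∫ t in (t₀-B)..(t₀+B), h t) + (∫ t in (t₀+B)..π, h t) := by
      rw [integral_add_adjacent_intervals (hint 0 (t₀-B)) (hint (t₀-B) (t₀+B)),
        integral_add_adjacent_intervals (hint 0 (t₀+B)) (hint (t₀+B) π)]
    have J : ∫ t in (0:ℝ)..π, h t ≤ π * (4*a)⁻¹ + 4*B := by
      rw [e1]
      have hia : 0 ≤ (4*a)⁻¹ := by positivity
      nlinarith [l1, m1, r1]
    -- symmetry
    have esym : ∫ t in (0:ℝ)..(2*π), h t = 2 * ∫ t in (0:ℝ)..π, h t := by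
      have h2 : ∫ t in π..(2*π), h t = ∫ t in (0:ℝ)..π, h t := by
        have hfun : (fun t => h (2*π - t)) = h := by
          funext t
          simp only [hhdef, Real.cos_two_pi_sub]
        have hc2 := integral_comp_sub_left (a := (0:ℝ)) (b := π) h (2*π)
        rw [show 2*π - π = π by ring, show 2*π - 0 = 2*π by ring, hfun] at hc2
        exact hc2.symm
      have h1 := integral_add_adjacent_intervals (hint 0 π) (hint π (2*π))
      rw [h2] at h1
      linarith
    -- final arithmetic
    rw [esym, hgb]
    have h8B : 8*B ≤ 40/9 * a⁻¹ := by
      rw [hBdef, hρa,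
        show 8*(10*Real.sqrt a/(3*(6*a^2))) = (80*Real.sqrt a)/(18*a^2) by ring,
        show (40:ℝ)/9 * a⁻¹ = 40/(9*a) by rw [inv_eq_one_div]; ring,
        div_le_div_iff₀ (by positivity) (by positivity)]
      nlinarith
    have hX : 0 < a⁻¹ := inv_pos.2 ha0
    have hkey2 : 40/9*a⁻¹ ≤ 3/2*π*a⁻¹ := by
      nlinarith [mul_nonneg (show (0:ℝ) ≤ 3/2*π - 40/9 by nlinarith) hX.le]
    have hq : π * (4*a)⁻¹ = π * a⁻¹/4 := by rw [mul_inv]; ring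
    linarith [J, h8B, hkey2]

lemma gg_eq (s : ℝ) : (if s = 0 then (1:ℝ) else min 1 |s|⁻¹) = gg s := by
  unfold gg
  rcases eq_or_ne s 0 with rfl | hs
  · simp
  · rw [if_neg hs]
    have h0 : 0 < |s| := abs_pos.2 hs
    rcases le_total |s| 1 with h | h
    · rw [max_eq_left h, inv_one, min_eq_left]
      exact (one_le_inv₀ h0).2 h
    · rw [max_eq_right h, min_eq_right]
      exact inv_le_one_of_one_le₀ h

/-- For `f(x) := min{1, |x₁|⁻¹}` (with value `1` when `x₁ = 0`) and
`r(x) := 6 max{1, x₁²}` on `ℝ² = ℂ` (writing `x₁ = Re x`): `f` is a continuous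
non-constant function with `0 ≤ f ≤ 1`, `r` is continuous with
`liminf_{|x|→∞} (r(x) - |x|) = -∞`, and `f` is `(σ,r)`-supermedian. -/
theorem stmt13 :
    let f : ℂ → ℝ := fun x => if x.re = 0 then 1 else min 1 |x.re|⁻¹
    let r : ℂ → ℝ := fun x => 6 * max 1 (x.re ^ 2)
    Continuous f ∧ (∃ x y : ℂ, f x ≠ f y) ∧ (∀ x : ℂ, 0 ≤ f x ∧ f x ≤ 1) ∧
    Continuous r ∧
    Filter.liminf (fun x : ℂ => ((r x - ‖x‖ : ℝ) : EReal))
      (Filter.comap (fun x : ℂ => ‖x‖) Filter.atTop) = ⊥ ∧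
    ∀ x : ℂ, (1 / (2 * Real.pi)) * (∫ t in (0:ℝ)..(2 * Real.pi),
        f (x + (r x : ℂ) * Complex.exp (t * Complex.I))) ≤ f x := by
  intro f r
  have hf : ∀ z : ℂ, f z = gg z.re := fun z => gg_eq z.re
  have hfeq : f = fun z => gg z.re := funext hf
  refine ⟨?_, ?_, ?_, ?_, ?_, ?_⟩
  · rw [hfeq]; exact gg_cont.comp Complex.continuous_re
  · refine ⟨0, 2, ?_⟩
    rw [hf, hf]
    have h0 : (0:ℂ).re = 0 := by simp
    have h2 : (2:ℂ).re = 2 := by simp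
    rw [h0, h2]
    unfold gg
    norm_num
  · intro x; rw [hf]; exact ⟨gg_nonneg _, gg_le_one _⟩
  · exact continuous_const.mul (continuous_const.max (Complex.continuous_re.pow 2))
  · rw [EReal.eq_bot_iff_forall_lt]
    intro M
    have hfreq : ∃ᶠ x in Filter.comap (fun x : ℂ => ‖x‖) Filter.atTop,
        ((r x - ‖x‖ : ℝ) : EReal) ≤ ((M - 1 : ℝ) : EReal) := by
      rw [Filter.frequently_comap]
      rw [Filter.frequently_atTop]
      intro N
      set y : ℝ := max (max N 0) (7 - M) with hydef
      have hy0 : 0 ≤ y := le_trans (le_max_right N 0) (le_max_left _ _)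
      have hyN : N ≤ y := le_trans (le_max_left N 0) (le_max_left _ _)
      have hyM : 7 - M ≤ y := le_max_right _ _
      refine ⟨y, hyN, (y : ℝ) * Complex.I, ?_, ?_⟩
      · rw [norm_mul, Complex.norm_I, Complex.norm_real, mul_one, Real.norm_eq_abs]
        exact abs_of_nonneg hy0
      · have hre : ((y : ℝ) * Complex.I).re = 0 := by simp
        rw [EReal.coe_le_coe_iff]
        have hr6 : r ((y : ℝ) * Complex.I) = 6 := by
          show 6 * max 1 (((y : ℝ) * Complex.I).re ^ 2) = 6
          rw [hre]; norm_num
        rw [hr6]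
        have habs : ‖((y : ℝ) : ℂ) * Complex.I‖ = y := by
          rw [norm_mul, Complex.norm_I, Complex.norm_real, mul_one, Real.norm_eq_abs]
          exact abs_of_nonneg hy0
        rw [habs]
        linarith
    have hle := Filter.liminf_le_of_frequently_le' hfreq
    exact lt_of_le_of_lt hle (by exact_mod_cast EReal.coe_lt_coe_iff.2 (by linarith : M - 1 < M))
  · intro x
    have hpi := pi_pos
    have hre : ∀ t : ℝ, (x + ((r x : ℝ) : ℂ) * Complex.exp (t * Complex.I)).re
        = x.re + 6 * max 1 (x.re ^ 2) * Real.cos t := by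
      intro t
      rw [Complex.add_re, Complex.re_ofReal_mul, Complex.exp_ofReal_mul_I_re]
    have hinteq : (∫ t in (0:ℝ)..(2 * π), f (x + (r x : ℂ) * Complex.exp (t * Complex.I)))
        = ∫ t in (0:ℝ)..(2 * π), gg (x.re + 6 * max 1 (x.re ^ 2) * Real.cos t) := by
      apply intervalIntegral.integral_congr
      intro t _
      simp only [hf, hre]
    rw [hinteq, hf]
    have hca := circle_avg x.re
    calc 1 / (2 * π) * ∫ t in (0:ℝ)..(2 * π), gg (x.re + 6 * max 1 (x.re ^ 2) * Real.cos t)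
        ≤ 1 / (2 * π) * (2 * π * gg x.re) := by
          apply mul_le_mul_of_nonneg_left _ (by positivity)
          exact hca
    _ = gg x.re := by field_simp
end

section
/- For x = (x₁, x₂) ∈ ℝ², let f(x) := min{1, |x₁|^{−1}} (with f(x) := 1 when x₁ = 0) and r(x) := 6 max{1, x₁²}. For fixed x ∈ ℝ² set a := max{|x₁|, 1} and A := {y ∈ ℝ² : |y₁| ≤ 2a}. Then the normalized arclength measure of A on the circle of center x and radius r(x) satisfies σ_{x,r(x)}(1_A) ≤ 1/(2a). -/
open Filter MeasureTheory

set_option maxHeartbeats 1000000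

/-- With `r(x) := 6 max{1, x₁²}` on `ℝ² = ℂ` (writing `x₁ = Re x`), for fixed `x` set
`a := max{|x₁|, 1}` and `A := {y : |y₁| ≤ 2a}`. Then the normalized arclength measure
of `A` on the circle of center `x` and radius `r(x)` satisfies
`σ_{x,r(x)}(1_A) ≤ 1/(2a)`. -/
theorem stmt14 (x : ℂ) :
    (1 / (2 * Real.pi)) * (∫ t in (0:ℝ)..(2 * Real.pi),
      Set.indicator {y : ℂ | |y.re| ≤ 2 * max |x.re| 1} (fun _ => (1:ℝ))
        (x + (6 * max 1 (x.re ^ 2) : ℝ) * Complex.exp (t * Complex.I)))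
    ≤ 1 / (2 * max |x.re| 1) := by
  have hpi : (0:ℝ) < Real.pi := Real.pi_pos
  set a := max |x.re| 1 with ha
  have ha1 : (1:ℝ) ≤ a := le_max_right _ _
  have ha0 : (0:ℝ) < a := by linarith
  have hxa : |x.re| ≤ a := le_max_left _ _
  have hxa' : -a ≤ x.re ∧ x.re ≤ a := abs_le.mp hxa
  set r := (6:ℝ) * max 1 (x.re ^ 2) with hrdef
  have hr : r = 6 * a ^ 2 := by
    rw [hrdef, ha]
    rcases le_total |x.re| 1 with h | h
    · rw [max_eq_right h]
      have h2 : x.re ^ 2 ≤ 1 := by nlinarith [sq_abs x.re, abs_nonneg x.re]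
      rw [max_eq_left h2]; ring
    · rw [max_eq_left h]
      have h2 : 1 ≤ x.re ^ 2 := by nlinarith [sq_abs x.re]
      rw [max_eq_right h2, ← sq_abs]
  have hr0 : (0:ℝ) < r := by nlinarith
  set α := (-(2 * a) - x.re) / r with hαdef
  set β := (2 * a - x.re) / r with hβdef
  have hαβ : α ≤ β := by
    rw [hαdef, hβdef, div_le_div_iff₀ hr0 hr0]; nlinarith
  have hαhalf : -(1/2 : ℝ) ≤ α := by
    rw [hαdef, le_div_iff₀ hr0]; nlinarith
  have hβhalf : β ≤ (1/2 : ℝ) := by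
    rw [hβdef, div_le_iff₀ hr0]; nlinarith
  have hβα : β - α = 2 / (3 * a) := by
    rw [hαdef, hβdef, hr]; field_simp; ring
  set c1 := Real.arccos β with hc1def
  set c2 := Real.arccos α with hc2def
  have harccos_anti : ∀ u v : ℝ, u ≤ v → Real.arccos v ≤ Real.arccos u := by
    intro u v huv
    rw [Real.arccos_eq_pi_div_two_sub_arcsin, Real.arccos_eq_pi_div_two_sub_arcsin]
    have := Real.monotone_arcsin huv
    linarith
  have hc1c2 : c1 ≤ c2 := harccos_anti α β hαβ
  have hc10 : 0 < c1 := Real.arccos_pos.mpr (by linarith)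
  have hc20 : 0 ≤ c2 := Real.arccos_nonneg α
  have hc1pi : c1 ≤ Real.pi := Real.arccos_le_pi β
  have hc2pi : c2 ≤ Real.pi := Real.arccos_le_pi α
  have hcosc1 : Real.cos c1 = β := Real.cos_arccos (by linarith) (by linarith)
  have hcosc2 : Real.cos c2 = α := Real.cos_arccos (by linarith) (by linarith)
  have hs3 : (0:ℝ) < Real.sqrt 3 := Real.sqrt_pos.mpr (by norm_num)
  have hs3sq : Real.sqrt 3 ^ 2 = 3 := Real.sq_sqrt (by norm_num)
  -- Lipschitz-type bound via the mean value theorem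
  have hlen : c2 - c1 ≤ (2 / Real.sqrt 3) * (β - α) := by
    rcases eq_or_lt_of_le hc1c2 with h | h
    · rw [← h]
      have : (0:ℝ) ≤ (2 / Real.sqrt 3) * (β - α) :=
        mul_nonneg (by positivity) (by linarith)
      linarith
    · obtain ⟨ξ, hξ, hder⟩ := exists_hasDerivAt_eq_slope Real.cos (fun t => -Real.sin t) h
        (Real.continuous_cos.continuousOn) (fun t _ => Real.hasDerivAt_cos t)
      have hξ1 : c1 < ξ := hξ.1
      have hξ2 : ξ < c2 := hξ.2
      have hcosξ1 : Real.cos ξ ≤ β := by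
        rw [← hcosc1]
        exact Real.cos_le_cos_of_nonneg_of_le_pi (by linarith) (by linarith) (le_of_lt hξ1)
      have hcosξ2 : α ≤ Real.cos ξ := by
        rw [← hcosc2]
        exact Real.cos_le_cos_of_nonneg_of_le_pi (by linarith) (by linarith) (le_of_lt hξ2)
      have hsinξ0 : 0 ≤ Real.sin ξ := Real.sin_nonneg_of_nonneg_of_le_pi (by linarith) (by linarith)
      have hsinsq : Real.sin ξ ^ 2 + Real.cos ξ ^ 2 = 1 := Real.sin_sq_add_cos_sq ξ
      have hl : -(1/2 : ℝ) ≤ Real.cos ξ := le_trans hαhalf hcosξ2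
      have hu : Real.cos ξ ≤ (1/2 : ℝ) := le_trans hcosξ1 hβhalf
      have hcosξabs : Real.cos ξ ^ 2 ≤ 1/4 := by
        nlinarith [mul_nonneg (by linarith : (0:ℝ) ≤ 1/2 - Real.cos ξ)
          (by linarith : (0:ℝ) ≤ 1/2 + Real.cos ξ)]
      have hsinξ : Real.sqrt 3 / 2 ≤ Real.sin ξ := by
        by_contra hcon
        push_neg at hcon
        have h2 : Real.sin ξ ^ 2 < (Real.sqrt 3 / 2) ^ 2 := by
          exact pow_lt_pow_left₀ hcon hsinξ0 (by norm_num)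
        rw [div_pow, hs3sq] at h2
        linarith [h2, hsinsq, hcosξabs]
      have hslope : Real.sin ξ * (c2 - c1) = β - α := by
        have hder' : -Real.sin ξ = (Real.cos c2 - Real.cos c1) / (c2 - c1) := hder
        rw [hcosc1, hcosc2, eq_div_iff (sub_ne_zero.mpr (ne_of_gt h))] at hder'
        linarith [hder']
      rw [div_mul_eq_mul_div, le_div_iff₀ hs3]
      have key : Real.sqrt 3 / 2 * (c2 - c1) ≤ β - α := by
        rw [← hslope]
        exact mul_le_mul_of_nonneg_right hsinξ (by linarith)
      have hring : (c2 - c1) * Real.sqrt 3 = 2 * (Real.sqrt 3 / 2 * (c2 - c1)) := by ring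
      linarith [key, hring]
  -- the integrand and the dominating function
  set A : Set ℂ := {y : ℂ | |y.re| ≤ 2 * a} with hAdef
  set f : ℝ → ℝ := fun t =>
    Set.indicator A (fun _ => (1:ℝ)) (x + (r:ℝ) * Complex.exp (t * Complex.I)) with hfdef
  set g : ℝ → ℝ := fun t =>
    Set.indicator (Set.Icc c1 c2) (fun _ => (1:ℝ)) t +
    Set.indicator (Set.Icc (2 * Real.pi - c2) (2 * Real.pi - c1)) (fun _ => (1:ℝ)) t with hgdef
  have hre : ∀ t : ℝ, (x + (r:ℝ) * Complex.exp (t * Complex.I)).re = x.re + r * Real.cos t := by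
    intro t
    simp [Complex.add_re, Complex.re_ofReal_mul, Complex.exp_ofReal_mul_I_re]
  have hAmeas : MeasurableSet A := by
    have : IsClosed A := isClosed_le (by fun_prop) continuous_const
    exact this.measurableSet
  have hφmeas : Measurable fun t : ℝ => x + (r:ℝ) * Complex.exp (t * Complex.I) := by
    fun_prop
  have hfint : IntervalIntegrable f volume 0 (2 * Real.pi) := by
    rw [intervalIntegrable_iff]
    have hfeq : f = Set.indicator ((fun t : ℝ => x + (r:ℝ) * Complex.exp (t * Complex.I)) ⁻¹' A)
        (fun _ => (1:ℝ)) := by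
      funext t
      by_cases hmem : (x + (r:ℝ) * Complex.exp (t * Complex.I)) ∈ A
      · rw [hfdef]; simp only []
        rw [Set.indicator_of_mem hmem, Set.indicator_of_mem (by exact hmem)]
      · rw [hfdef]; simp only []
        rw [Set.indicator_of_notMem hmem, Set.indicator_of_notMem (by exact hmem)]
    rw [hfeq]
    exact (integrableOn_const measure_Ioc_lt_top.ne).indicator (hφmeas hAmeas)
  have hIccint : ∀ u v : ℝ, IntervalIntegrable
      (Set.indicator (Set.Icc u v) (fun _ => (1:ℝ))) volume 0 (2 * Real.pi) := by
    intro u v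
    rw [intervalIntegrable_iff]
    exact (integrableOn_const measure_Ioc_lt_top.ne).indicator measurableSet_Icc
  have hgint : IntervalIntegrable g volume 0 (2 * Real.pi) :=
    (hIccint c1 c2).add (hIccint (2 * Real.pi - c2) (2 * Real.pi - c1))
  -- pointwise bound on [0, 2π]
  have hfg : ∀ t ∈ Set.Icc (0:ℝ) (2 * Real.pi), f t ≤ g t := by
    intro t ht
    have hg1 : (0:ℝ) ≤ Set.indicator (Set.Icc c1 c2) (fun _ => (1:ℝ)) t :=
      Set.indicator_nonneg (fun _ _ => zero_le_one) t
    have hg2 : (0:ℝ) ≤ Set.indicator (Set.Icc (2 * Real.pi - c2) (2 * Real.pi - c1))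
        (fun _ => (1:ℝ)) t := Set.indicator_nonneg (fun _ _ => zero_le_one) t
    by_cases hmem : (x + (r:ℝ) * Complex.exp (t * Complex.I)) ∈ A
    · have hmem' : |x.re + r * Real.cos t| ≤ 2 * a := by
        have := hmem
        rw [hAdef] at this
        simpa [hre t] using this
      have hcosb := abs_le.mp hmem'
      have hcosα : α ≤ Real.cos t := by
        rw [hαdef, div_le_iff₀ hr0]; nlinarith [hcosb.1]
      have hcosβ : Real.cos t ≤ β := by
        rw [hβdef, le_div_iff₀ hr0]; nlinarith [hcosb.2]
      have hf1 : f t = 1 := by rw [hfdef]; exact Set.indicator_of_mem hmem _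
      rcases le_total t Real.pi with htp | htp
      · have harc : Real.arccos (Real.cos t) = t := Real.arccos_cos ht.1 htp
        have h1 : c1 ≤ t := by
          rw [← harc, hc1def]; exact harccos_anti (Real.cos t) β hcosβ
        have h2 : t ≤ c2 := by
          rw [← harc, hc2def]; exact harccos_anti α (Real.cos t) hcosα
        have : Set.indicator (Set.Icc c1 c2) (fun _ => (1:ℝ)) t = 1 :=
          Set.indicator_of_mem (Set.mem_Icc.mpr ⟨h1, h2⟩) _
        rw [hf1, hgdef]; simp only []; linarith
      · set s := 2 * Real.pi - t with hsdef
        have hs0 : 0 ≤ s := by rw [hsdef]; linarith [ht.2]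
        have hspi : s ≤ Real.pi := by rw [hsdef]; linarith
        have hcoss : Real.cos s = Real.cos t := by rw [hsdef]; exact Real.cos_two_pi_sub t
        have harc : Real.arccos (Real.cos s) = s := Real.arccos_cos hs0 hspi
        have h1 : c1 ≤ s := by
          rw [← harc, hc1def, hcoss]; exact harccos_anti (Real.cos t) β hcosβ
        have h2 : s ≤ c2 := by
          rw [← harc, hc2def, hcoss]; exact harccos_anti α (Real.cos t) hcosα
        have hmem2 : t ∈ Set.Icc (2 * Real.pi - c2) (2 * Real.pi - c1) := by
          constructor <;> rw [hsdef] at h1 h2 <;> [linarith; linarith]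
        have : Set.indicator (Set.Icc (2 * Real.pi - c2) (2 * Real.pi - c1))
            (fun _ => (1:ℝ)) t = 1 := Set.indicator_of_mem hmem2 _
        rw [hf1, hgdef]; simp only []; linarith
    · have hf0 : f t = 0 := by rw [hfdef]; exact Set.indicator_of_notMem hmem _
      rw [hf0, hgdef]; simp only []; linarith
  -- compute the integral of the dominating function
  have hIcc_integral : ∀ u v : ℝ, 0 < u → v ≤ 2 * Real.pi → u ≤ v →
      (∫ t in (0:ℝ)..(2 * Real.pi), Set.indicator (Set.Icc u v) (fun _ => (1:ℝ)) t) = v - u := by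
    intro u v hu hv huv
    rw [intervalIntegral.integral_of_le (by linarith),
      MeasureTheory.integral_indicator measurableSet_Icc,
      MeasureTheory.Measure.restrict_restrict measurableSet_Icc,
      Set.inter_eq_left.mpr (fun z hz => Set.mem_Ioc.mpr
        ⟨lt_of_lt_of_le hu (Set.mem_Icc.mp hz).1, le_trans (Set.mem_Icc.mp hz).2 hv⟩)]
    rw [MeasureTheory.setIntegral_const, Real.volume_real_Icc_of_le huv, smul_eq_mul, mul_one]
  have hg_integral : (∫ t in (0:ℝ)..(2 * Real.pi), g t) = 2 * (c2 - c1) := by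
    rw [hgdef]
    rw [intervalIntegral.integral_add (hIccint c1 c2)
      (hIccint (2 * Real.pi - c2) (2 * Real.pi - c1))]
    rw [hIcc_integral c1 c2 hc10 (by linarith) hc1c2,
      hIcc_integral (2 * Real.pi - c2) (2 * Real.pi - c1) (by linarith) (by linarith)
        (by linarith)]
    ring
  have hmono : (∫ t in (0:ℝ)..(2 * Real.pi), f t) ≤ 2 * (c2 - c1) := by
    rw [← hg_integral]
    exact intervalIntegral.integral_mono_on (by linarith) hfint hgint hfg
  have hbound : (∫ t in (0:ℝ)..(2 * Real.pi), f t) ≤ 8 / (3 * Real.sqrt 3 * a) := by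
    have h1 : 2 * (c2 - c1) ≤ 2 * ((2 / Real.sqrt 3) * (2 / (3 * a))) := by
      rw [← hβα]; nlinarith
    have h2 : 2 * ((2 / Real.sqrt 3) * (2 / (3 * a))) = 8 / (3 * Real.sqrt 3 * a) := by
      field_simp; ring
    linarith
  calc (1 / (2 * Real.pi)) * (∫ t in (0:ℝ)..(2 * Real.pi), f t)
      ≤ (1 / (2 * Real.pi)) * (8 / (3 * Real.sqrt 3 * a)) := by
        apply mul_le_mul_of_nonneg_left hbound (by positivity)
    _ ≤ 1 / (2 * a) := by
        rw [show (1 / (2 * Real.pi)) * (8 / (3 * Real.sqrt 3 * a))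
            = 8 / (2 * Real.pi * (3 * Real.sqrt 3 * a)) by field_simp]
        rw [div_le_div_iff₀ (by positivity) (by positivity)]
        have hs17 : (1.7:ℝ) ≤ Real.sqrt 3 := by nlinarith [hs3, hs3sq]
        have h16 : (16:ℝ) ≤ 6 * Real.pi * Real.sqrt 3 := by
          nlinarith [Real.pi_gt_three, hs17]
        nlinarith [mul_le_mul_of_nonneg_right h16 (le_of_lt ha0)]
end
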